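/- arXiv:1405.5428 — 2 statements merged into one kernel-verified Lean document; each statement's English description precedes it below -/
import Mathlib

section
/- Let d ≥ 1 and let W : ℝ^d → ℝ ∪ {+∞} satisfy Hypotheses (H1)–(H6). Then there exists K > 0, depending only on W and the dimension d, such that for every R ≥ 0 and every global minimiser ρ_R of the interaction energy E on P_R(ℝ^d), the diameter of the support of ρ_R is at most K. -/
open MeasureTheory Filter Metric
open scoped ENNReal

/-- `ℝ^d` with the Euclidean structure. -/
abbrev Ed (d : ℕ) : Type := EuclideanSpace ℝ (Fin d)

/-- The positive part of an extended real number, as an element of `ℝ≥0∞`. -/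
noncomputable def EReal.posPart (x : EReal) : ℝ≥0∞ := (x ⊔ 0).abs

/-- The integral of an `EReal`-valued function, defined as the difference (in `EReal`)
of the lower integrals of the positive and the negative parts. -/
noncomputable def eInt {α : Type*} [MeasurableSpace α] (μ : Measure α) (f : α → EReal) :
    EReal :=
  ((∫⁻ x, (f x).posPart ∂μ : ℝ≥0∞) : EReal) - ((∫⁻ x, (-f x).posPart ∂μ : ℝ≥0∞) : EReal)

/-- The interaction energy `E(ρ) = (1/2) ∬ W(x-y) dρ(x) dρ(y)`, with values in `EReal`. -/
noncomputable def energy {d : ℕ} (W : Ed d → EReal) (ρ : Measure (Ed d)) : EReal :=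
  ((1 / 2 : ℝ) : EReal) * eInt (ρ.prod ρ) (fun p => W (p.1 - p.2))

/-- The support of a measure: the set of points all of whose open neighbourhoods have
positive measure. -/
def msupport {α : Type*} [TopologicalSpace α] [MeasurableSpace α] (μ : Measure α) : Set α :=
  {x | ∀ U : Set α, IsOpen U → x ∈ U → 0 < μ U}

/-- `ρ ∈ P_R(ℝ^d)`: the support of `ρ` is contained in the closed ball `B̄(0,R)`. -/
def InBall {d : ℕ} (ρ : Measure (Ed d)) (R : ℝ) : Prop :=
  msupport ρ ⊆ Metric.closedBall (0 : Ed d) R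

/-- `ρ` is a global minimiser of the interaction energy on `P(ℝ^d)`. -/
def IsMinimiser {d : ℕ} (W : Ed d → EReal) (ρ : Measure (Ed d)) : Prop :=
  IsProbabilityMeasure ρ ∧
    ∀ μ : Measure (Ed d), IsProbabilityMeasure μ → energy W ρ ≤ energy W μ

/-- `ρ` is a global minimiser of the interaction energy on `P_R(ℝ^d)`. -/
def IsMinimiserOn {d : ℕ} (W : Ed d → EReal) (ρ : Measure (Ed d)) (R : ℝ) : Prop :=
  IsProbabilityMeasure ρ ∧ InBall ρ R ∧
    ∀ μ : Measure (Ed d), IsProbabilityMeasure μ → InBall μ R → energy W ρ ≤ energy W μ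

section UBhelpers


lemma ub_posPart_coe (x : ℝ) : (x : EReal).posPart = ENNReal.ofReal x := by
  unfold EReal.posPart
  rcases le_total x 0 with h | h
  · rw [sup_of_le_right (EReal.coe_nonpos.mpr h), ← EReal.coe_zero, EReal.abs_def,
      abs_zero, ENNReal.ofReal_zero, eq_comm, ENNReal.ofReal_eq_zero]
    exact h
  · rw [sup_of_le_left (EReal.coe_nonneg.mpr h), EReal.abs_def, abs_of_nonneg h]

lemma ub_posPart_top : (⊤ : EReal).posPart = ⊤ := by
  unfold EReal.posPart
  rw [sup_of_le_left le_top]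
  rfl

lemma ub_posPart_bot : (⊥ : EReal).posPart = 0 := by
  unfold EReal.posPart
  rw [sup_of_le_right bot_le, ← EReal.coe_zero, EReal.abs_def, abs_zero, ENNReal.ofReal_zero]

lemma ub_abs_mono {x y : EReal} (hx : 0 ≤ x) (h : x ≤ y) : x.abs ≤ y.abs := by
  induction y with
  | bot => exact absurd (hx.trans h) (by simp)
  | coe b =>
      induction x with
      | bot => simp at hx
      | coe a =>
          rw [EReal.abs_def, EReal.abs_def]
          have ha : 0 ≤ a := EReal.coe_nonneg.mp hx
          have hab : a ≤ b := by exact_mod_cast h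
          rw [abs_of_nonneg ha, abs_of_nonneg (ha.trans hab)]
          exact ENNReal.ofReal_le_ofReal hab
      | top => exact absurd h (by simp [lt_irrefl])
  | top => simp [EReal.abs_top]

lemma ub_posPart_mono : Monotone EReal.posPart := by
  intro x y h
  exact ub_abs_mono le_sup_right (sup_le_sup_right h 0)

lemma ub_posPart_measurable : Measurable EReal.posPart :=
  ub_posPart_mono.measurable

lemma ub_negPart_measurable : Measurable (fun x : EReal => (-x).posPart) := by
  have : Antitone (fun x : EReal => (-x).posPart) := by
    intro x y h
    exact ub_posPart_mono (EReal.neg_le_neg_iff.mpr h)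
  exact this.measurable

lemma ub_posPart_strict {x y : EReal} (hx : 0 ≤ x) (hxt : x ≠ ⊤) (h : x < y) :
    x.posPart < y.posPart := by
  unfold EReal.posPart
  rw [sup_of_le_left hx, sup_of_le_left (hx.trans h.le)]
  induction x with
  | bot => simp at hx
  | coe a =>
      induction y with
      | bot => exact absurd h not_lt_bot
      | coe b =>
          rw [EReal.abs_def, EReal.abs_def]
          have ha : 0 ≤ a := EReal.coe_nonneg.mp hx
          have hab : a < b := by exact_mod_cast h
          rw [abs_of_nonneg ha, abs_of_nonneg (ha.trans hab.le)]
          exact (ENNReal.ofReal_lt_ofReal_iff (ha.trans_lt hab)).mpr hab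
      | top => rw [EReal.abs_top]; exact (EReal.abs_coe_lt_top a)
  | top => exact absurd rfl hxt



lemma ub_pointwise (c : ℝ) (hc : c < 0) {y : EReal} (hy : (c : EReal) ≤ y) :
    (y - (c : EReal)).posPart = y.posPart + (ENNReal.ofReal (-c) - (-y).posPart) ∧
      (-y).posPart ≤ ENNReal.ofReal (-c) := by
  induction y with
  | bot => exact absurd hy (by simp)
  | coe r =>
      have hcr : c ≤ r := EReal.coe_le_coe_iff.mp hy
      rw [show ((r : EReal) - (c : EReal)) = ((r - c : ℝ) : EReal) from (EReal.coe_sub r c).symm,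
        show (-(r : EReal)) = ((-r : ℝ) : EReal) from (EReal.coe_neg r).symm,
        ub_posPart_coe, ub_posPart_coe, ub_posPart_coe]
      constructor
      · rcases le_total 0 r with h | h
        · rw [ENNReal.ofReal_eq_zero.mpr (neg_nonpos.mpr h), tsub_zero,
            ← ENNReal.ofReal_add h (neg_nonneg.mpr hc.le)]
          ring_nf
        · rw [ENNReal.ofReal_eq_zero.mpr h, zero_add, ← ENNReal.ofReal_sub _ (neg_nonneg.mpr h)]
          ring_nf
      · exact ENNReal.ofReal_le_ofReal (by linarith)
  | top =>
      constructor
      · rw [EReal.top_sub_coe, ub_posPart_top]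
        simp
      · rw [show (-(⊤ : EReal)) = ⊥ from rfl, ub_posPart_bot]
        exact zero_le

lemma ub_coe_toReal {X : ℝ≥0∞} (h : X ≠ ⊤) : (X : EReal) = ((X.toReal : ℝ) : EReal) := by
  conv_lhs => rw [← ENNReal.ofReal_toReal h]
  rw [EReal.coe_ennreal_ofReal, max_eq_left ENNReal.toReal_nonneg]

lemma ub_eInt_eq {α : Type*} [MeasurableSpace α] (P : Measure α) [IsProbabilityMeasure P]
    (f : α → EReal) (hf : Measurable f) (c : ℝ) (hc : c < 0) (hcf : ∀ x, (c : EReal) ≤ f x) :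
    eInt P f = ((∫⁻ x, (f x - (c : EReal)).posPart ∂P : ℝ≥0∞) : EReal) + (c : EReal) := by
  set B := ∫⁻ x, (f x).posPart ∂P with hB
  set Cn := ∫⁻ x, (-f x).posPart ∂P with hCn
  set A := ∫⁻ x, (f x - (c : EReal)).posPart ∂P with hA
  have hmeasB : Measurable fun x => (f x).posPart := ub_posPart_measurable.comp hf
  have hmeasC : Measurable fun x => (-f x).posPart := ub_negPart_measurable.comp hf
  -- key ℝ≥0∞ identity : A + Cn = B + ofReal (-c)
  have key : A + Cn = B + ENNReal.ofReal (-c) := by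
    have h1 : A = B + ∫⁻ x, (ENNReal.ofReal (-c) - (-f x).posPart) ∂P := by
      rw [hA, ← lintegral_add_left hmeasB]
      congr 1
      funext x
      exact (ub_pointwise c hc (hcf x)).1
    have h2 : (∫⁻ x, (ENNReal.ofReal (-c) - (-f x).posPart) ∂P) + Cn = ENNReal.ofReal (-c) := by
      rw [hCn, ← lintegral_add_right _ hmeasC]
      have : ∀ x, (ENNReal.ofReal (-c) - (-f x).posPart) + (-f x).posPart = ENNReal.ofReal (-c) :=
        fun x => tsub_add_cancel_of_le (ub_pointwise c hc (hcf x)).2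
      simp only [this]
      simp
    calc A + Cn = B + ((∫⁻ x, (ENNReal.ofReal (-c) - (-f x).posPart) ∂P) + Cn) := by
          rw [h1, add_assoc]
      _ = B + ENNReal.ofReal (-c) := by rw [h2]
  have hCnle : Cn ≤ ENNReal.ofReal (-c) := by
    calc Cn ≤ ∫⁻ _, ENNReal.ofReal (-c) ∂P :=
          lintegral_mono fun x => (ub_pointwise c hc (hcf x)).2
      _ = ENNReal.ofReal (-c) := by simp
  have hCtop : Cn ≠ ⊤ := by
    intro h
    rw [h] at hCnle
    exact absurd (top_le_iff.mp hCnle) ENNReal.ofReal_ne_top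
  have hCcoe : (Cn : EReal) = ((Cn.toReal : ℝ) : EReal) := ub_coe_toReal hCtop
  rw [show eInt P f = (B : EReal) - (Cn : EReal) from rfl]
  by_cases hAtop : A = ⊤
  · have hBtop : B = ⊤ := by
      by_contra hB
      have : A + Cn ≠ ⊤ := by
        rw [key]
        exact ENNReal.add_ne_top.mpr ⟨hB, ENNReal.ofReal_ne_top⟩
      exact this (by rw [hAtop]; simp)
    rw [hAtop, hBtop, hCcoe, EReal.coe_ennreal_top, EReal.top_sub_coe, EReal.top_add_coe]
  · have hBtop : B ≠ ⊤ := by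
      intro hB
      rw [hB] at key
      have : A + Cn ≠ ⊤ := ENNReal.add_ne_top.mpr ⟨hAtop, hCtop⟩
      exact this (by rw [key]; simp)
    have hAcoe : (A : EReal) = ((A.toReal : ℝ) : EReal) := ub_coe_toReal hAtop
    have hBcoe : (B : EReal) = ((B.toReal : ℝ) : EReal) := ub_coe_toReal hBtop
    have keyR : A.toReal + Cn.toReal = B.toReal + (-c) := by
      have := congrArg ENNReal.toReal key
      rw [ENNReal.toReal_add hAtop hCtop, ENNReal.toReal_add hBtop ENNReal.ofReal_ne_top,
        ENNReal.toReal_ofReal (neg_nonneg.mpr hc.le)] at this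
      exact this
    rw [hAcoe, hBcoe, hCcoe, ← EReal.coe_sub, ← EReal.coe_add]
    exact_mod_cast (by linarith : B.toReal - Cn.toReal = A.toReal + c)


variable {α : Type*} [TopologicalSpace α] [MeasurableSpace α] [OpensMeasurableSpace α]
set_option linter.unusedSectionVars false

lemma ub_not_msupport {μ : Measure α} {x : α} (h : x ∉ msupport μ) :
    ∃ U : Set α, IsOpen U ∧ x ∈ U ∧ μ U = 0 := by
  simp only [msupport, Set.mem_setOf_eq, not_forall] at h
  obtain ⟨U, hU, hx, hpos⟩ := h
  exact ⟨U, hU, hx, by simpa using hpos⟩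

lemma ub_msupport_compl_null [SecondCountableTopology α] (μ : Measure α) :
    μ (msupport μ)ᶜ = 0 := by
  apply measure_null_of_locally_null
  intro x hx
  obtain ⟨U, hU, hxU, h0⟩ := ub_not_msupport hx
  exact ⟨U, mem_nhdsWithin_of_mem_nhds (hU.mem_nhds hxU), h0⟩

lemma ub_msupport_mono {μ ν : Measure α} (h : μ ≤ ν) : msupport μ ⊆ msupport ν := by
  intro x hx U hU hxU
  exact lt_of_lt_of_le (hx U hU hxU) (h U)

lemma ub_msupport_restrict (μ : Measure α) (S : Set α) :
    msupport (μ.restrict S) ⊆ msupport μ :=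
  ub_msupport_mono Measure.restrict_le_self

lemma ub_msupport_restrict_closed (μ : Measure α) {S : Set α} (hS : IsClosed S) :
    msupport (μ.restrict S) ⊆ S := by
  intro x hx
  by_contra hxS
  have h0 : μ.restrict S Sᶜ = 0 := by
    rw [Measure.restrict_apply hS.measurableSet.compl]
    simp
  exact absurd (hx Sᶜ hS.isOpen_compl hxS) (by simp [h0])

lemma ub_msupport_smul (μ : Measure α) (c : ℝ≥0∞) : msupport (c • μ) ⊆ msupport μ := by
  intro x hx U hU hxU
  have := hx U hU hxU
  simp only [Measure.smul_apply, smul_eq_mul] at this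
  rcases eq_or_ne (μ U) 0 with h | h
  · rw [h, mul_zero] at this; exact absurd this (lt_irrefl _)
  · exact pos_iff_ne_zero.mpr h

lemma ub_msupport_add (μ ν : Measure α) : msupport (μ + ν) ⊆ msupport μ ∪ msupport ν := by
  intro x hx
  by_contra hmem
  rw [Set.mem_union] at hmem
  push_neg at hmem
  obtain ⟨U, hU, hxU, h0⟩ := ub_not_msupport (hmem.1 : x ∉ msupport μ)
  obtain ⟨V, hV, hxV, h0'⟩ := ub_not_msupport hmem.2
  have := hx (U ∩ V) (hU.inter hV) ⟨hxU, hxV⟩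
  have hz : (μ + ν) (U ∩ V) = 0 := by
    simp only [Measure.add_apply]
    rw [measure_inter_null_of_null_left _ h0, measure_inter_null_of_null_right _ h0', add_zero]
  rw [hz] at this
  exact absurd this (lt_irrefl _)

lemma ub_lintegral_strict {μ : Measure α} (hμ : μ ≠ 0) {f f' : α → ℝ≥0∞}
    (hf : Measurable f) (hf' : Measurable f') (hlt : ∀ᵐ x ∂μ, f x < f' x)
    (hfin : ∫⁻ x, f' x ∂μ ≠ ⊤) : ∫⁻ x, f x ∂μ < ∫⁻ x, f' x ∂μ := by
  have hle : f ≤ᵐ[μ] f' := hlt.mono fun x h => h.le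
  have hIle : ∫⁻ x, f x ∂μ ≤ ∫⁻ x, f' x ∂μ := lintegral_mono_ae hle
  rcases lt_or_eq_of_le hIle with h | h
  · exact h
  · exfalso
    have hffin : ∫⁻ x, f x ∂μ ≠ ⊤ := by rw [h]; exact hfin
    have hsub : ∫⁻ x, (f' x - f x) ∂μ = ∫⁻ x, f' x ∂μ - ∫⁻ x, f x ∂μ :=
      lintegral_sub hf hffin hle
    rw [← h, tsub_self] at hsub
    have hz : ∀ᵐ x ∂μ, f' x - f x = 0 := (lintegral_eq_zero_iff (hf'.sub hf)).mp hsub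
    have : ∀ᵐ x ∂μ, False := by
      filter_upwards [hlt, hz] with x h1 h2
      exact absurd (tsub_eq_zero_iff_le.mp h2) (not_le.mpr h1)
    have hne : (MeasureTheory.ae μ).NeBot := ae_neBot.mpr hμ
    exact (this.exists).choose_spec



/-- iterated interaction integral -/
noncomputable def Jit {d : ℕ} (g : Ed d → ℝ≥0∞) (μ : Measure (Ed d)) : ℝ≥0∞ :=
  ∫⁻ x, ∫⁻ y, g (x - y) ∂μ ∂μ

lemma ub_gmeas {d : ℕ} {W : Ed d → EReal} (hW : Measurable W) (c : ℝ) :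
    Measurable (fun z : Ed d => (W z - (c : EReal)).posPart) := by
  have h1 : Measurable (fun x : EReal => (x - (c : EReal)).posPart) := by
    have hmono : Monotone (fun x : EReal => (x - (c : EReal)).posPart) := by
      intro x y h
      exact ub_posPart_mono (EReal.sub_le_sub h le_rfl)
    exact hmono.measurable
  exact h1.comp hW

lemma ub_energy_eq {d : ℕ} {W : Ed d → EReal} (hW : Measurable W) {Wmin : ℝ}
    (hWmin : Wmin < 0) (hbound : ∀ x, (Wmin : EReal) ≤ W x) (μ : Measure (Ed d))
    [IsProbabilityMeasure μ] :
    energy W μ = ((1 / 2 : ℝ) : EReal) *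
      (((Jit (fun z => (W z - (Wmin : EReal)).posPart) μ : ℝ≥0∞) : EReal) + (Wmin : EReal)) := by
  unfold energy
  have hfm : Measurable (fun p : Ed d × Ed d => W (p.1 - p.2)) :=
    hW.comp (measurable_fst.sub measurable_snd)
  rw [ub_eInt_eq (μ.prod μ) _ hfm Wmin hWmin (fun p => hbound _)]
  congr 2
  have hgm : Measurable (fun p : Ed d × Ed d => (W (p.1 - p.2) - (Wmin : EReal)).posPart) :=
    (ub_gmeas hW Wmin).comp (measurable_fst.sub measurable_snd)
  rw [lintegral_prod _ hgm.aemeasurable]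
  rfl

lemma ub_half_lt {x y : EReal} (h : x < y) :
    ((1 / 2 : ℝ) : EReal) * x < ((1 / 2 : ℝ) : EReal) * y := by
  have hpos : (0 : ℝ) < 1 / 2 := by norm_num
  induction x with
  | bot =>
      rw [EReal.coe_mul_bot_of_pos hpos]
      induction y with
      | bot => exact absurd h (lt_irrefl _)
      | coe r => rw [← EReal.coe_mul]; exact EReal.bot_lt_coe _
      | top => rw [EReal.coe_mul_top_of_pos hpos]; exact bot_lt_top
  | coe r =>
      induction y with
      | bot => exact absurd h (by simp)
      | coe s =>
          rw [← EReal.coe_mul, ← EReal.coe_mul]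
          have : r < s := by exact_mod_cast h
          exact_mod_cast (by nlinarith : 1 / 2 * r < 1 / 2 * s)
      | top =>
          rw [EReal.coe_mul_top_of_pos hpos, ← EReal.coe_mul]
          exact EReal.coe_lt_top _
  | top => exact absurd h (by simp)

lemma ub_half_strictMono : StrictMono (fun x : EReal => ((1 / 2 : ℝ) : EReal) * x) :=
  fun _ _ h => ub_half_lt h

lemma ub_half_le_iff {x y : EReal} :
    ((1 / 2 : ℝ) : EReal) * x ≤ ((1 / 2 : ℝ) : EReal) * y ↔ x ≤ y :=
  ub_half_strictMono.le_iff_le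


variable {d : ℕ} {g : Ed d → ℝ≥0∞}

lemma ub_gprod_meas (hg : Measurable g) : Measurable (fun p : Ed d × Ed d => g (p.1 - p.2)) :=
  hg.comp (measurable_fst.sub measurable_snd)

lemma ub_psi_meas (hg : Measurable g) (μ : Measure (Ed d)) [SFinite μ] :
    Measurable (fun x => ∫⁻ y, g (x - y) ∂μ) :=
  (ub_gprod_meas hg).lintegral_prod_right'

/-- symmetry of the cross term -/
lemma ub_cross_symm (hg : Measurable g) (hgsym : ∀ z, g (-z) = g z) (μ ν : Measure (Ed d)) [SFinite μ] [SFinite ν] :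
    ∫⁻ x, ∫⁻ y, g (x - y) ∂ν ∂μ = ∫⁻ x, ∫⁻ y, g (x - y) ∂μ ∂ν := by
  rw [lintegral_lintegral_swap (ub_gprod_meas hg).aemeasurable]
  congr 1
  funext y
  congr 1
  funext x
  rw [← hgsym (x - y), neg_sub]

lemma ub_Jit_eq_lintegral_psi (μ : Measure (Ed d)) :
    Jit g μ = ∫⁻ x, ∫⁻ y, g (x - y) ∂μ ∂μ := rfl

/-- Euler–Lagrange-type inequality -/
lemma ub_EL (hg : Measurable g) (hgsym : ∀ z, g (-z) = g z) {R : ℝ} {ρ : Measure (Ed d)} [IsProbabilityMeasure ρ]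
    (hball : InBall ρ R)
    (hmin : ∀ μ : Measure (Ed d), IsProbabilityMeasure μ → InBall μ R → Jit g ρ ≤ Jit g μ)
    (hJfin : Jit g ρ ≠ ⊤)
    (σ : Measure (Ed d)) [IsProbabilityMeasure σ] (hσball : InBall σ R)
    (hJσ : Jit g σ ≠ ⊤) :
    Jit g ρ ≤ ∫⁻ x, ∫⁻ y, g (x - y) ∂σ ∂ρ := by
  set J := Jit g ρ with hJ
  set Q := Jit g σ with hQ
  set X := ∫⁻ x, ∫⁻ y, g (x - y) ∂σ ∂ρ with hX
  by_contra hcon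
  push_neg at hcon
  have hXfin : X ≠ ⊤ := (hcon.trans_le le_top).ne
  -- the competitor inequality for each t ∈ (0,1)
  have hcomp : ∀ t : ℝ, 0 < t → t < 1 →
      J ≤ ENNReal.ofReal (1 - t) * (ENNReal.ofReal (1 - t) * J + ENNReal.ofReal t * X) +
        ENNReal.ofReal t * (ENNReal.ofReal (1 - t) * X + ENNReal.ofReal t * Q) := by
    intro t ht0 ht1
    set s' := ENNReal.ofReal (1 - t) with hs'
    set t' := ENNReal.ofReal t with ht'
    set μt := s' • ρ + t' • σ with hμt
    have hprob : IsProbabilityMeasure μt := by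
      constructor
      simp only [hμt, Measure.add_apply, Measure.smul_apply, smul_eq_mul,
        measure_univ, mul_one]
      rw [hs', ht', ← ENNReal.ofReal_add (by linarith) ht0.le]
      norm_num
    have hμtball : InBall μt R := by
      refine subset_trans (ub_msupport_add _ _) ?_
      refine Set.union_subset ?_ ?_
      · exact subset_trans (ub_msupport_smul _ _) hball
      · exact subset_trans (ub_msupport_smul _ _) hσball
    have hexp : Jit g μt = s' * (s' * J + t' * X) +
        t' * (s' * (∫⁻ x, ∫⁻ y, g (x - y) ∂ρ ∂σ) + t' * Q) := by
      have hin : ∀ x : Ed d, (∫⁻ y, g (x - y) ∂μt) =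
          s' * (∫⁻ y, g (x - y) ∂ρ) + t' * (∫⁻ y, g (x - y) ∂σ) := by
        intro x
        rw [hμt, lintegral_add_measure, lintegral_smul_measure, lintegral_smul_measure, smul_eq_mul, smul_eq_mul]
      have hmeasρ := ub_psi_meas hg ρ
      have hmeasσ := ub_psi_meas hg σ
      calc Jit g μt = ∫⁻ x, (s' * (∫⁻ y, g (x - y) ∂ρ) + t' * (∫⁻ y, g (x - y) ∂σ)) ∂μt := by
            rw [Jit]
            congr 1
            funext x
            exact hin x
        _ = s' * (s' * J + t' * X) +
            t' * (s' * (∫⁻ x, ∫⁻ y, g (x - y) ∂ρ ∂σ) + t' * Q) := by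
            rw [hμt, lintegral_add_measure, lintegral_smul_measure, lintegral_smul_measure,
              lintegral_add_left (hmeasρ.const_mul s'),
              lintegral_add_left (hmeasρ.const_mul s'),
              lintegral_const_mul _ hmeasρ, lintegral_const_mul _ hmeasσ,
              lintegral_const_mul _ hmeasρ, lintegral_const_mul _ hmeasσ]
            rfl
    have hXswap : ∫⁻ x, ∫⁻ y, g (x - y) ∂ρ ∂σ = X := ub_cross_symm hg hgsym σ ρ
    rw [hXswap] at hexp
    have := hmin μt hprob hμtball
    rw [hexp] at this
    exact this
  -- pass to real numbers
  have hQle : Q ≠ ⊤ := hJσ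
  set j := J.toReal with hj
  set x := X.toReal with hx
  set q := Q.toReal with hq
  have hDpos : 0 < j - x := by
    have := (ENNReal.toReal_lt_toReal hXfin hJfin).mpr hcon
    linarith
  set D := j - x with hD
  set M := |j| + 2 * |x| + |q| + 1 with hM
  have hMpos : 0 < M := by positivity
  set t := min (1/2 : ℝ) (D / M) with ht
  have ht0 : 0 < t := lt_min (by norm_num) (div_pos hDpos hMpos)
  have ht1 : t < 1 := lt_of_le_of_lt (min_le_left _ _) (by norm_num)
  have hreal : j ≤ (1 - t) * ((1 - t) * j + t * x) + t * ((1 - t) * x + t * q) := by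
    have h := hcomp t ht0 ht1
    have hs'r : (ENNReal.ofReal (1 - t)).toReal = 1 - t := ENNReal.toReal_ofReal (by linarith)
    have ht'r : (ENNReal.ofReal t).toReal = t := ENNReal.toReal_ofReal ht0.le
    have hfin1 : ENNReal.ofReal (1 - t) * J + ENNReal.ofReal t * X ≠ ⊤ :=
      ENNReal.add_ne_top.mpr ⟨ENNReal.mul_ne_top ENNReal.ofReal_ne_top hJfin,
        ENNReal.mul_ne_top ENNReal.ofReal_ne_top hXfin⟩
    have hfin2 : ENNReal.ofReal (1 - t) * X + ENNReal.ofReal t * Q ≠ ⊤ :=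
      ENNReal.add_ne_top.mpr ⟨ENNReal.mul_ne_top ENNReal.ofReal_ne_top hXfin,
        ENNReal.mul_ne_top ENNReal.ofReal_ne_top hQle⟩
    have hfin : ENNReal.ofReal (1 - t) * (ENNReal.ofReal (1 - t) * J + ENNReal.ofReal t * X) +
        ENNReal.ofReal t * (ENNReal.ofReal (1 - t) * X + ENNReal.ofReal t * Q) ≠ ⊤ :=
      ENNReal.add_ne_top.mpr ⟨ENNReal.mul_ne_top ENNReal.ofReal_ne_top hfin1,
        ENNReal.mul_ne_top ENNReal.ofReal_ne_top hfin2⟩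
    have := (ENNReal.toReal_le_toReal hJfin hfin).mpr h
    rw [ENNReal.toReal_add (ENNReal.mul_ne_top ENNReal.ofReal_ne_top hfin1)
        (ENNReal.mul_ne_top ENNReal.ofReal_ne_top hfin2),
      ENNReal.toReal_mul, ENNReal.toReal_mul,
      ENNReal.toReal_add (ENNReal.mul_ne_top ENNReal.ofReal_ne_top hJfin)
        (ENNReal.mul_ne_top ENNReal.ofReal_ne_top hXfin),
      ENNReal.toReal_add (ENNReal.mul_ne_top ENNReal.ofReal_ne_top hXfin)
        (ENNReal.mul_ne_top ENNReal.ofReal_ne_top hQle),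
      ENNReal.toReal_mul, ENNReal.toReal_mul, ENNReal.toReal_mul, ENNReal.toReal_mul,
      hs'r, ht'r] at this
    exact this
  -- derive contradiction
  have hkey : 2 * D ≤ t * (j - 2 * x + q) := by nlinarith [hreal]
  have htM : t * M ≤ D := by
    calc t * M ≤ (D / M) * M := by
          apply mul_le_mul_of_nonneg_right (min_le_right _ _) hMpos.le
      _ = D := by field_simp
  have habs : t * (j - 2 * x + q) ≤ t * M := by
    apply mul_le_mul_of_nonneg_left _ ht0.le
    rw [hM]
    have h1 : j - 2 * x + q ≤ |j| + 2 * |x| + |q| := by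
      have := abs_le.mp (le_refl |j|)
      have h2 := le_abs_self j
      have h3 := neg_abs_le x
      have h4 := le_abs_self q
      linarith
    linarith
  linarith [hkey, habs, htM, hDpos]


variable {d : ℕ} {g : Ed d → ℝ≥0∞}

/-- EL inequality for restrictions: `ρ S * J ≤ ∫_S ψ dρ`. -/
lemma ub_EL_restrict (hg : Measurable g) (hgsym : ∀ z, g (-z) = g z) {R : ℝ}
    {ρ : Measure (Ed d)} [IsProbabilityMeasure ρ] (hball : InBall ρ R)
    (hmin : ∀ μ : Measure (Ed d), IsProbabilityMeasure μ → InBall μ R → Jit g ρ ≤ Jit g μ)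
    (hJfin : Jit g ρ ≠ ⊤) {S : Set (Ed d)} (hS : MeasurableSet S) :
    ρ S * Jit g ρ ≤ ∫⁻ x in S, (∫⁻ y, g (x - y) ∂ρ) ∂ρ := by
  rcases eq_or_ne (ρ S) 0 with h0 | h0
  · rw [h0, zero_mul]; exact zero_le
  have hfin : ρ S ≠ ⊤ := (measure_lt_top ρ S).ne
  set σ := (ρ S)⁻¹ • ρ.restrict S with hσ
  have hprob : IsProbabilityMeasure σ := by
    constructor
    rw [hσ, Measure.smul_apply, Measure.restrict_apply_univ, smul_eq_mul,
      ENNReal.inv_mul_cancel h0 hfin]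
  have hσball : InBall σ R :=
    subset_trans (ub_msupport_smul _ _) (subset_trans (ub_msupport_restrict _ _) hball)
  have hJσfin : Jit g σ ≠ ⊤ := by
    have hle : Jit g σ ≤ (ρ S)⁻¹ * ((ρ S)⁻¹ * Jit g ρ) := by
      rw [Jit, hσ, lintegral_smul_measure]
      apply mul_le_mul_right _ _
      calc ∫⁻ x, (∫⁻ y, g (x - y) ∂((ρ S)⁻¹ • ρ.restrict S)) ∂ρ.restrict S
          = ∫⁻ x, (ρ S)⁻¹ * (∫⁻ y, g (x - y) ∂ρ.restrict S) ∂ρ.restrict S := by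
            congr 1; funext x; rw [lintegral_smul_measure, smul_eq_mul]
        _ = (ρ S)⁻¹ * ∫⁻ x, (∫⁻ y, g (x - y) ∂ρ.restrict S) ∂ρ.restrict S := by
            rw [lintegral_const_mul _ (ub_psi_meas hg _)]
        _ ≤ (ρ S)⁻¹ * Jit g ρ := by
            apply mul_le_mul_right _ _
            rw [Jit]
            apply lintegral_mono' Measure.restrict_le_self
            intro x
            exact lintegral_mono' Measure.restrict_le_self le_rfl
    intro htop
    rw [htop] at hle
    exact absurd (top_le_iff.mp hle)
      (ENNReal.mul_ne_top (ENNReal.inv_ne_top.mpr h0)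
        (ENNReal.mul_ne_top (ENNReal.inv_ne_top.mpr h0) hJfin))
  haveI := hprob
  have h := ub_EL hg hgsym hball hmin hJfin σ hσball hJσfin
  have hswap : (∫⁻ x, ∫⁻ y, g (x - y) ∂σ ∂ρ) = ∫⁻ x, ∫⁻ y, g (x - y) ∂ρ ∂σ :=
    ub_cross_symm hg hgsym ρ σ
  rw [hswap, hσ, lintegral_smul_measure] at h
  calc ρ S * Jit g ρ ≤ ρ S * ((ρ S)⁻¹ * ∫⁻ x, (∫⁻ y, g (x - y) ∂ρ) ∂ρ.restrict S) :=
        mul_le_mul_right h _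
    _ = ∫⁻ x in S, (∫⁻ y, g (x - y) ∂ρ) ∂ρ := by
        rw [← mul_assoc, ENNReal.mul_inv_cancel h0 hfin, one_mul]

/-- EL equality for restrictions. -/
lemma ub_EL_eq (hg : Measurable g) (hgsym : ∀ z, g (-z) = g z) {R : ℝ}
    {ρ : Measure (Ed d)} [IsProbabilityMeasure ρ] (hball : InBall ρ R)
    (hmin : ∀ μ : Measure (Ed d), IsProbabilityMeasure μ → InBall μ R → Jit g ρ ≤ Jit g μ)
    (hJfin : Jit g ρ ≠ ⊤) {S : Set (Ed d)} (hS : MeasurableSet S) :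
    ∫⁻ x in S, (∫⁻ y, g (x - y) ∂ρ) ∂ρ = ρ S * Jit g ρ := by
  set a := ∫⁻ x in S, (∫⁻ y, g (x - y) ∂ρ) ∂ρ with ha
  set b := ∫⁻ x in Sᶜ, (∫⁻ y, g (x - y) ∂ρ) ∂ρ with hb
  have hab : a + b = Jit g ρ := lintegral_add_compl _ hS
  have h1 : ρ S * Jit g ρ ≤ a := ub_EL_restrict hg hgsym hball hmin hJfin hS
  have h2 : ρ Sᶜ * Jit g ρ ≤ b := ub_EL_restrict hg hgsym hball hmin hJfin hS.compl
  have hsum : ρ S * Jit g ρ + ρ Sᶜ * Jit g ρ = Jit g ρ := by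
    rw [← add_mul, measure_add_measure_compl hS, measure_univ, one_mul]
  by_contra hne
  have hlt : ρ S * Jit g ρ < a := lt_of_le_of_ne h1 (fun h => hne h.symm)
  have hcfin : ρ Sᶜ * Jit g ρ ≠ ⊤ :=
    ENNReal.mul_ne_top (measure_lt_top ρ Sᶜ).ne hJfin
  have : Jit g ρ < Jit g ρ := by
    calc Jit g ρ = ρ S * Jit g ρ + ρ Sᶜ * Jit g ρ := hsum.symm
      _ < a + b := ENNReal.add_lt_add_of_lt_of_le hcfin hlt h2
      _ = Jit g ρ := hab
  exact absurd this (lt_irrefl _)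


variable {d : ℕ} {g : Ed d → ℝ≥0∞}

/-- a.e. upper bound on the potential -/
lemma ub_psi_ae (hg : Measurable g) (hgsym : ∀ z, g (-z) = g z) {R : ℝ}
    {ρ : Measure (Ed d)} [IsProbabilityMeasure ρ] (hball : InBall ρ R)
    (hmin : ∀ μ : Measure (Ed d), IsProbabilityMeasure μ → InBall μ R → Jit g ρ ≤ Jit g μ)
    (hJfin : Jit g ρ ≠ ⊤) :
    ρ {x | Jit g ρ < ∫⁻ y, g (x - y) ∂ρ} = 0 := by
  set J := Jit g ρ with hJ
  set ψ := fun x => ∫⁻ y, g (x - y) ∂ρ with hψ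
  have hψm : Measurable ψ := ub_psi_meas hg ρ
  have hcover : {x | J < ψ x} ⊆ ⋃ n : ℕ, {x | J + ((n : ℝ≥0∞))⁻¹ ≤ ψ x} := by
    intro x hx
    simp only [Set.mem_setOf_eq] at hx
    have hne : ψ x - J ≠ 0 := by
      rw [← pos_iff_ne_zero]
      exact tsub_pos_of_lt hx
    obtain ⟨n, hn⟩ := ENNReal.exists_inv_nat_lt hne
    refine Set.mem_iUnion.mpr ⟨n, ?_⟩
    simp only [Set.mem_setOf_eq]
    calc J + ((n : ℝ≥0∞))⁻¹ ≤ J + (ψ x - J) := add_le_add_right hn.le J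
      _ = ψ x := add_tsub_cancel_of_le hx.le
  have hzero : ∀ n : ℕ, ρ {x | J + ((n : ℝ≥0∞))⁻¹ ≤ ψ x} = 0 := by
    intro n
    set S := {x | J + ((n : ℝ≥0∞))⁻¹ ≤ ψ x} with hS
    have hSm : MeasurableSet S := measurableSet_le (measurable_const.add measurable_const) hψm
    have heq : ∫⁻ x in S, ψ x ∂ρ = ρ S * J := ub_EL_eq hg hgsym hball hmin hJfin hSm
    have hge : (J + ((n : ℝ≥0∞))⁻¹) * ρ S ≤ ∫⁻ x in S, ψ x ∂ρ := by
      rw [← setLIntegral_const S (J + ((n : ℝ≥0∞))⁻¹)]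
      apply setLIntegral_mono hψm
      intro x hx
      exact hx
    rw [heq] at hge
    by_contra h0
    have hρfin : ρ S ≠ ⊤ := (measure_lt_top ρ S).ne
    have : J * ρ S + ((n : ℝ≥0∞))⁻¹ * ρ S ≤ J * ρ S + 0 := by
      rw [add_zero, ← add_mul]
      rw [mul_comm (ρ S) J] at hge
      exact hge
    have hJρfin : J * ρ S ≠ ⊤ := ENNReal.mul_ne_top hJfin hρfin
    have h2 := (ENNReal.add_le_add_iff_left hJρfin).mp this
    have h3 : ((n : ℝ≥0∞))⁻¹ * ρ S = 0 := le_antisymm h2 (zero_le)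
    rcases mul_eq_zero.mp h3 with h | h
    · exact absurd h (ENNReal.inv_ne_zero.mpr (ENNReal.natCast_ne_top n))
    · exact h0 h
  refine le_antisymm ?_ (zero_le)
  calc ρ {x | J < ψ x} ≤ ρ (⋃ n : ℕ, {x | J + ((n : ℝ≥0∞))⁻¹ ≤ ψ x}) := measure_mono hcover
    _ = 0 := measure_iUnion_null hzero

/-- the concentration-of-mass lemma -/
lemma ub_mass (hg : Measurable g) (hgsym : ∀ z, g (-z) = g z) {R : ℝ}
    {ρ : Measure (Ed d)} [IsProbabilityMeasure ρ] (hball : InBall ρ R)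
    (hmin : ∀ μ : Measure (Ed d), IsProbabilityMeasure μ → InBall μ R → Jit g ρ ≤ Jit g μ)
    {J₁ c' : ℝ≥0∞} (hJle : Jit g ρ ≤ J₁) (hJ₁fin : J₁ ≠ ⊤)
    (hc'0 : c' ≠ 0) (hc'top : c' ≠ ⊤) {A : ℝ}
    (hfar : ∀ z : Ed d, A ≤ ‖z‖ → c' ≤ g z) :
    ∀ xb ∈ msupport ρ, 1 - J₁ / c' ≤ ρ (Metric.closedBall xb (A + 1)) := by
  intro xb hxb
  have hJfin : Jit g ρ ≠ ⊤ := fun h => hJ₁fin (top_le_iff.mp (h ▸ hJle))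
  set J := Jit g ρ with hJ
  set ψ := fun x => ∫⁻ y, g (x - y) ∂ρ with hψ
  -- find a point x near xb with ψ x ≤ J
  have hballpos : 0 < ρ (Metric.ball xb 1) := hxb _ Metric.isOpen_ball (Metric.mem_ball_self one_pos)
  have hbad : ρ {x | J < ψ x} = 0 := ub_psi_ae hg hgsym hball hmin hJfin
  have hexists : ∃ x, dist x xb < 1 ∧ ψ x ≤ J := by
    by_contra hcon
    push_neg at hcon
    have hsub : Metric.ball xb 1 ⊆ {x | J < ψ x} := by
      intro x hx
      exact hcon x (Metric.mem_ball.mp hx)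
    exact absurd (le_antisymm (hbad ▸ measure_mono hsub) (zero_le)) hballpos.ne'
  obtain ⟨x, hx1, hxψ⟩ := hexists
  -- far mass bound
  have hfarbound : c' * ρ ((Metric.ball x A)ᶜ) ≤ J₁ := by
    have h1 : c' * ρ ((Metric.ball x A)ᶜ) = ∫⁻ _ in (Metric.ball x A)ᶜ, c' ∂ρ := by
      rw [setLIntegral_const]
    have h2 : ∫⁻ _ in (Metric.ball x A)ᶜ, c' ∂ρ ≤ ∫⁻ y in (Metric.ball x A)ᶜ, g (x - y) ∂ρ := by
      apply setLIntegral_mono (hg.comp (measurable_const.sub measurable_id))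
      intro y hy
      apply hfar
      show A ≤ ‖x - y‖
      rw [← dist_eq_norm]
      exact not_lt.mp (fun hlt => hy (Metric.mem_ball'.mpr hlt))
    have h3 : ∫⁻ y in (Metric.ball x A)ᶜ, g (x - y) ∂ρ ≤ ψ x := setLIntegral_le_lintegral _ _
    calc c' * ρ ((Metric.ball x A)ᶜ) ≤ ψ x := by rw [h1]; exact h2.trans h3
      _ ≤ J := hxψ
      _ ≤ J₁ := hJle
  have hcompl : ρ ((Metric.ball x A)ᶜ) ≤ J₁ / c' := by
    rw [ENNReal.le_div_iff_mul_le (Or.inl hc'0) (Or.inl hc'top), mul_comm]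
    exact hfarbound
  have hmain : 1 - J₁ / c' ≤ ρ (Metric.ball x A) := by
    have h4 : ρ (Metric.ball x A) = 1 - ρ ((Metric.ball x A)ᶜ) := by
      have hc := measure_compl (μ := ρ) (s := (Metric.ball x A)ᶜ)
        Metric.isOpen_ball.measurableSet.compl (measure_ne_top ρ _)
      rw [compl_compl, measure_univ] at hc
      exact hc
    rw [h4]
    exact tsub_le_tsub_left hcompl 1
  refine hmain.trans (measure_mono ?_)
  intro y hy
  rw [Metric.mem_closedBall]
  calc dist y xb ≤ dist y x + dist x xb := dist_triangle _ _ _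
    _ ≤ A + 1 := add_le_add (le_of_lt (Metric.mem_ball.mp hy)) hx1.le

variable {d : ℕ} {g : Ed d → ℝ≥0∞}

/-- cross interaction term -/
noncomputable def Cross (g : Ed d → ℝ≥0∞) (α β : Measure (Ed d)) : ℝ≥0∞ :=
  ∫⁻ x, ∫⁻ y, g (x - y) ∂β ∂α

lemma ub_Jit_add (hg : Measurable g) (α β : Measure (Ed d)) [SFinite α] [SFinite β] :
    Jit g (α + β) = Jit g α + Cross g α β + Cross g β α + Jit g β := by
  have hψα := ub_psi_meas hg α
  have hψβ := ub_psi_meas hg β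
  have hin : ∀ x : Ed d, (∫⁻ y, g (x - y) ∂(α + β)) =
      (∫⁻ y, g (x - y) ∂α) + (∫⁻ y, g (x - y) ∂β) := fun x => lintegral_add_measure _ α β
  rw [Jit]
  calc ∫⁻ x, ∫⁻ y, g (x - y) ∂(α + β) ∂(α + β)
      = ∫⁻ x, ((∫⁻ y, g (x - y) ∂α) + (∫⁻ y, g (x - y) ∂β)) ∂(α + β) := by
        congr 1; funext x; exact hin x
    _ = (∫⁻ x, ((∫⁻ y, g (x - y) ∂α) + (∫⁻ y, g (x - y) ∂β)) ∂α) +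
        (∫⁻ x, ((∫⁻ y, g (x - y) ∂α) + (∫⁻ y, g (x - y) ∂β)) ∂β) := lintegral_add_measure _ α β
    _ = Jit g α + Cross g α β + Cross g β α + Jit g β := by
        rw [lintegral_add_left hψα, lintegral_add_left hψα]
        rw [Jit, Cross, Cross, Jit]
        ring

lemma ub_prod_ne_zero {α β : Measure (Ed d)} [SFinite α] [SFinite β]
    (hα : α Set.univ ≠ 0) (hβ : β Set.univ ≠ 0) : α.prod β ≠ 0 := by
  intro h
  have : α.prod β Set.univ = 0 := by rw [h]; rfl
  rw [← Set.univ_prod_univ, Measure.prod_prod] at this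
  rcases mul_eq_zero.mp this with h' | h'
  · exact hα h'
  · exact hβ h'

lemma ub_surgery (hg : Measurable g) (hgsym : ∀ z, g (-z) = g z) {R : ℝ}
    {ρ : Measure (Ed d)} [IsProbabilityMeasure ρ] (hball : InBall ρ R)
    (hmin : ∀ μ : Measure (Ed d), IsProbabilityMeasure μ → InBall μ R → Jit g ρ ≤ Jit g μ)
    (hJfin : Jit g ρ ≠ ⊤)
    {S₁ S₂ : Set (Ed d)} (h1c : IsClosed S₁) (h2c : IsClosed S₂) (hdisj : Disjoint S₁ S₂)
    (hcover : msupport ρ ⊆ S₁ ∪ S₂) (hm1 : ρ S₁ ≠ 0) (hm2 : ρ S₂ ≠ 0)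
    (e : Ed d)
    (hballmove : ∀ x ∈ msupport ρ ∩ S₂, ‖x - e‖ ≤ R)
    (hdec : ∀ x ∈ S₂, ∀ y ∈ S₁, g (x - e - y) < g (x - y)) :
    False := by
  have hcompl : ρ ((S₁ ∪ S₂)ᶜ) = 0 :=
    measure_mono_null (Set.compl_subset_compl.mpr hcover) (ub_msupport_compl_null ρ)
  set ρ₁ := ρ.restrict S₁ with hρ₁
  set ρ₂ := ρ.restrict S₂ with hρ₂
  have hsplit : ρ = ρ₁ + ρ₂ := by
    have h1 : ρ.restrict (S₁ ∪ S₂) + ρ.restrict ((S₁ ∪ S₂)ᶜ) = ρ :=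
      Measure.restrict_add_restrict_compl (h1c.measurableSet.union h2c.measurableSet)
    rw [Measure.restrict_eq_zero.mpr hcompl, add_zero] at h1
    rw [← h1, Measure.restrict_union hdisj h2c.measurableSet]
  set T := fun x : Ed d => x - e with hT
  have hTmeas : Measurable T := measurable_id.sub measurable_const
  set μ' := ρ₁ + Measure.map T ρ₂ with hμ'
  haveI : IsFiniteMeasure (Measure.map T ρ₂) := by
    constructor
    rw [Measure.map_apply hTmeas MeasurableSet.univ]
    exact measure_lt_top ρ₂ _
  -- μ' is a probability measure
  have hμ'univ : μ' Set.univ = 1 := by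
    have : ρ Set.univ = 1 := measure_univ
    rw [hsplit] at this
    rw [hμ', Measure.add_apply, Measure.map_apply hTmeas MeasurableSet.univ, Set.preimage_univ]
    rw [Measure.add_apply] at this
    exact this
  have hμ'prob : IsProbabilityMeasure μ' := ⟨hμ'univ⟩
  -- μ' is supported in the ball
  have hμ'ball : InBall μ' R := by
    refine subset_trans (ub_msupport_add _ _) (Set.union_subset ?_ ?_)
    · exact subset_trans (ub_msupport_restrict _ _) hball
    · intro x hx
      have hxe : x + e ∈ msupport ρ₂ := by
        intro U hU hxU
        have hU' : IsOpen ((fun z : Ed d => z + e) ⁻¹' U) :=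
          hU.preimage (continuous_id.add continuous_const)
        have hxU' : x ∈ (fun z : Ed d => z + e) ⁻¹' U := hxU
        have hpos := hx _ hU' hxU'
        rw [Measure.map_apply hTmeas (hU'.measurableSet)] at hpos
        have : T ⁻¹' ((fun z : Ed d => z + e) ⁻¹' U) = U := by
          ext z
          simp [hT, sub_add_cancel]
        rwa [this] at hpos
      have hmem : x + e ∈ msupport ρ ∩ S₂ :=
        ⟨ub_msupport_restrict ρ S₂ hxe, ub_msupport_restrict_closed ρ h2c hxe⟩
      have := hballmove _ hmem
      rw [add_sub_cancel_right] at this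
      rw [Metric.mem_closedBall, dist_zero_right]
      exact this
  -- energy expansions
  have hJρ : Jit g ρ = Jit g ρ₁ + Cross g ρ₁ ρ₂ + Cross g ρ₂ ρ₁ + Jit g ρ₂ := by
    conv_lhs => rw [hsplit]
    exact ub_Jit_add hg ρ₁ ρ₂
  have hJμ' : Jit g μ' = Jit g ρ₁ + Cross g ρ₁ (Measure.map T ρ₂) +
      Cross g (Measure.map T ρ₂) ρ₁ + Jit g (Measure.map T ρ₂) := ub_Jit_add hg _ _
  -- map identities
  have hψρ₁ := ub_psi_meas hg ρ₁
  have hψρ₂ := ub_psi_meas hg ρ₂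
  have hJmap : Jit g (Measure.map T ρ₂) = Jit g ρ₂ := by
    rw [Jit, Jit, lintegral_map (ub_psi_meas hg _) hTmeas]
    congr 1
    funext x
    have hmeas : Measurable (fun y : Ed d => g (T x - y)) :=
      hg.comp (measurable_const.sub measurable_id)
    rw [lintegral_map hmeas hTmeas]
    congr 1
    funext y
    simp only [hT]
    rw [sub_sub_sub_cancel_right]
  have hCrossMap1 : Cross g (Measure.map T ρ₂) ρ₁ = ∫⁻ x, ∫⁻ y, g (x - e - y) ∂ρ₁ ∂ρ₂ := by
    rw [Cross, lintegral_map (ub_psi_meas hg _) hTmeas]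
  have hCrossMap2 : Cross g ρ₁ (Measure.map T ρ₂) = ∫⁻ x, ∫⁻ y, g (x - (y - e)) ∂ρ₂ ∂ρ₁ := by
    rw [Cross]
    congr 1
    funext x
    have hmeas : Measurable (fun y : Ed d => g (x - y)) :=
      hg.comp (measurable_const.sub measurable_id)
    rw [lintegral_map hmeas hTmeas]
  -- finiteness of pieces
  have hfin4 : Jit g ρ₁ ≠ ⊤ ∧ Cross g ρ₁ ρ₂ ≠ ⊤ ∧ Cross g ρ₂ ρ₁ ≠ ⊤ ∧ Jit g ρ₂ ≠ ⊤ := by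
    have h := hJρ ▸ hJfin
    refine ⟨?_, ?_, ?_, ?_⟩ <;> intro htop <;> apply h <;>
      simp [htop]
  -- strict decrease of the main cross term
  have hP2 : (ρ₂.prod ρ₁) ≠ 0 := by
    apply ub_prod_ne_zero
    · rw [hρ₂, Measure.restrict_apply_univ]; exact hm2
    · rw [hρ₁, Measure.restrict_apply_univ]; exact hm1
  have haeP : ∀ᵐ p ∂(ρ₂.prod ρ₁), p ∈ S₂ ×ˢ S₁ := by
    rw [hρ₂, hρ₁, Measure.prod_restrict]
    exact ae_restrict_mem (h2c.measurableSet.prod h1c.measurableSet)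
  have hmeas1 : Measurable (fun p : Ed d × Ed d => g (p.1 - e - p.2)) := by
    apply hg.comp
    exact (measurable_fst.sub measurable_const).sub measurable_snd
  have hstrict : Cross g (Measure.map T ρ₂) ρ₁ < Cross g ρ₂ ρ₁ := by
    rw [hCrossMap1, Cross]
    rw [← lintegral_prod _ hmeas1.aemeasurable, ← lintegral_prod _ (ub_gprod_meas hg).aemeasurable]
    apply ub_lintegral_strict hP2 hmeas1 (ub_gprod_meas hg)
    · filter_upwards [haeP] with p hp
      exact hdec p.1 hp.1 p.2 hp.2
    · rw [lintegral_prod _ (ub_gprod_meas hg).aemeasurable]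
      intro htop
      apply hfin4.2.2.1
      rw [Cross]
      exact htop
  -- weak decrease of the other cross term
  have hle2 : Cross g ρ₁ (Measure.map T ρ₂) ≤ Cross g ρ₁ ρ₂ := by
    rw [hCrossMap2, Cross]
    have haeP' : ∀ᵐ p ∂(ρ₁.prod ρ₂), p ∈ S₁ ×ˢ S₂ := by
      rw [hρ₂, hρ₁, Measure.prod_restrict]
      exact ae_restrict_mem (h1c.measurableSet.prod h2c.measurableSet)
    have hmeas2 : Measurable (fun p : Ed d × Ed d => g (p.1 - (p.2 - e))) := by
      apply hg.comp
      exact measurable_fst.sub (measurable_snd.sub measurable_const)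
    rw [← lintegral_prod _ hmeas2.aemeasurable, ← lintegral_prod _ (ub_gprod_meas hg).aemeasurable]
    apply lintegral_mono_ae
    filter_upwards [haeP'] with p hp
    have key : g (p.1 - (p.2 - e)) < g (p.1 - p.2) := by
      have h1 : g (p.1 - (p.2 - e)) = g (p.2 - e - p.1) := by
        rw [← hgsym (p.2 - e - p.1), neg_sub]
      have h2 : g (p.1 - p.2) = g (p.2 - p.1) := by
        rw [← hgsym (p.2 - p.1), neg_sub]
      rw [h1, h2]
      exact hdec p.2 hp.2 p.1 hp.1
    exact key.le
  -- combine
  have hlt : Jit g μ' < Jit g ρ := by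
    rw [hJμ', hJρ, hJmap]
    have step1 : Jit g ρ₁ + Cross g ρ₁ (Measure.map T ρ₂) + Cross g (Measure.map T ρ₂) ρ₁ ≤
        Jit g ρ₁ + Cross g ρ₁ ρ₂ + Cross g (Measure.map T ρ₂) ρ₁ :=
      add_le_add_left (add_le_add_right hle2 _) _
    have step2 : Jit g ρ₁ + Cross g ρ₁ ρ₂ + Cross g (Measure.map T ρ₂) ρ₁ <
        Jit g ρ₁ + Cross g ρ₁ ρ₂ + Cross g ρ₂ ρ₁ :=
      ENNReal.add_lt_add_left (ENNReal.add_ne_top.mpr ⟨hfin4.1, hfin4.2.1⟩) hstrict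
    calc Jit g ρ₁ + Cross g ρ₁ (Measure.map T ρ₂) + Cross g (Measure.map T ρ₂) ρ₁ + Jit g ρ₂
        ≤ Jit g ρ₁ + Cross g ρ₁ ρ₂ + Cross g (Measure.map T ρ₂) ρ₁ + Jit g ρ₂ :=
          add_le_add_left step1 _
      _ < Jit g ρ₁ + Cross g ρ₁ ρ₂ + Cross g ρ₂ ρ₁ + Jit g ρ₂ :=
          ENNReal.add_lt_add_right hfin4.2.2.2 step2
  exact absurd (hmin μ' hμ'prob hμ'ball) (not_le.mpr hlt)


variable {d : ℕ} {g : Ed d → ℝ≥0∞}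

lemma ub_abs_coord_le_norm (z : Ed d) (k : Fin d) : |z k| ≤ ‖z‖ := by
  rw [EuclideanSpace.norm_eq]
  have h1 : |z k| = Real.sqrt (‖z k‖ ^ 2) := by
    rw [Real.sqrt_sq_eq_abs, Real.norm_eq_abs, abs_abs]
  rw [h1]
  apply Real.sqrt_le_sqrt
  exact Finset.single_le_sum (f := fun i => ‖z i‖ ^ 2) (fun i _ => sq_nonneg _)
    (Finset.mem_univ k)

lemma ub_coord_continuous (k : Fin d) : Continuous (fun x : Ed d => x k) :=
  (EuclideanSpace.proj (𝕜 := ℝ) k).continuous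

lemma ub_coord_measurable (k : Fin d) : Measurable (fun x : Ed d => x k) :=
  (ub_coord_continuous k).measurable

lemma ub_single_coord (k j : Fin d) (a : ℝ) :
    (EuclideanSpace.single k a : Ed d) j = if j = k then a else 0 :=
  EuclideanSpace.single_apply k a j

lemma ub_norm_sub_single_le {R : ℝ} (x : Ed d) (k : Fin d) (s : ℝ) (hs : s = 1 ∨ s = -1)
    (hx : ‖x‖ ≤ R) (hgood : 1 ≤ s * x k) :
    ‖x - EuclideanSpace.single k s‖ ≤ R := by
  have hsq : ‖x - EuclideanSpace.single k s‖ ^ 2 =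
      ‖x‖ ^ 2 - 2 * (s * x k) + s ^ 2 := by
    rw [norm_sub_sq_real]
    have hinner : (inner ℝ x (EuclideanSpace.single k s : Ed d) : ℝ) = s * x k := by
      rw [EuclideanSpace.inner_single_right]
      simp
    rw [hinner, EuclideanSpace.norm_single]
    have : ‖s‖ ^ 2 = s ^ 2 := by rw [Real.norm_eq_abs, sq_abs]
    rw [this]
  have hs2 : s ^ 2 = 1 := by rcases hs with h | h <;> rw [h] <;> norm_num
  have h0 : (0:ℝ) ≤ ‖x‖ := norm_nonneg x
  have h1 : (0:ℝ) ≤ ‖x - EuclideanSpace.single k s‖ := norm_nonneg _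
  nlinarith [hsq, hs2, hgood, hx, h0, h1]

/-- Main coordinate-spread bound for minimisers. -/
lemma ub_coord_bound (hg : Measurable g) (hgsym : ∀ z : Ed d, g (-z) = g z)
    {R₆ : ℝ} (hR₆ : 0 < R₆)
    (hg6 : ∀ (k : Fin d) (z z' : Ed d), (∀ j, j ≠ k → z j = z' j) →
      R₆ ≤ z k → z k < z' k → g z < g z')
    {c' : ℝ≥0∞} (hc'0 : c' ≠ 0) (hc'top : c' ≠ ⊤)
    {A : ℝ} (hA : 1 ≤ A) (hfar : ∀ z : Ed d, A ≤ ‖z‖ → c' ≤ g z)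
    {J₁ : ℝ≥0∞} (hJ₁ : J₁ < c')
    {n : ℕ} (hn : 1 < (n : ℝ≥0∞) * (1 - J₁ / c'))
    {G' : ℝ} (hG1 : 2 * A + 4 ≤ G') (hG2 : R₆ + 3 ≤ G')
    {R : ℝ} {ρ : Measure (Ed d)} [IsProbabilityMeasure ρ] (hball : InBall ρ R)
    (hmin : ∀ μ : Measure (Ed d), IsProbabilityMeasure μ → InBall μ R → Jit g ρ ≤ Jit g μ)
    (hJle : Jit g ρ ≤ J₁)
    (k : Fin d) (xb yb : Ed d) (hxb : xb ∈ msupport ρ) (hyb : yb ∈ msupport ρ) :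
    yb k - xb k ≤ (2 * n + 2) * G' := by
  by_contra hcon
  push_neg at hcon
  set t₀ := xb k with ht₀
  set t₁ := yb k with ht₁
  have hG'pos : 0 < G' := by linarith
  have hJ₁fin : J₁ ≠ ⊤ := (hJ₁.trans_le le_top).ne_top
  have hJfin : Jit g ρ ≠ ⊤ := by
    intro h
    exact hJ₁fin (top_le_iff.mp (h ▸ hJle))
  set m₀ := 1 - J₁ / c' with hm₀
  have hmass := ub_mass hg hgsym hball hmin hJle hJ₁fin hc'0 hc'top hfar
  by_cases hall : ∀ i : Fin n, ∃ z, z ∈ msupport ρ ∧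
      z k ∈ Set.Icc (t₀ + (2 * (i : ℕ) + 1) * G') (t₀ + (2 * (i : ℕ) + 2) * G')
  · -- pigeonhole contradiction
    choose z hzsupp hzI using hall
    set Slab : Fin n → Set (Ed d) := fun i => {y | |y k - z i k| ≤ A + 1} with hSlab
    have hSlabm : ∀ i, MeasurableSet (Slab i) := by
      intro i
      have : Slab i = (fun y : Ed d => y k) ⁻¹' (Set.Icc (z i k - (A+1)) (z i k + (A+1))) := by
        ext y
        simp only [hSlab, Set.mem_setOf_eq, Set.mem_preimage, Set.mem_Icc, abs_le]
        constructor <;> intro h <;> constructor <;> linarith [h.1, h.2]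
      rw [this]
      exact (ub_coord_measurable k) measurableSet_Icc
    have hSlabdisj : Pairwise (Function.onFun Disjoint Slab) := by
      intro i j hij
      have hsep : 2 * (A + 1) < |z i k - z j k| := by
        have hi1 := (hzI i).1
        have hi2 := (hzI i).2
        have hj1 := (hzI j).1
        have hj2 := (hzI j).2
        rcases lt_or_gt_of_ne (fun h : (i : ℕ) = (j : ℕ) => hij (Fin.ext h)) with h | h
        · -- i < j
          have : z j k - z i k ≥ G' := by
            have : (2 * (j:ℕ) + 1 : ℝ) ≥ 2 * (i:ℕ) + 3 := by
              have : ((i:ℕ) : ℝ) + 1 ≤ ((j:ℕ) : ℝ) := by exact_mod_cast h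
              linarith
            nlinarith [hi2, hj1, hG'pos]
          rw [abs_sub_comm, abs_of_pos (by linarith)]
          linarith
        · have : z i k - z j k ≥ G' := by
            have : (2 * (i:ℕ) + 1 : ℝ) ≥ 2 * (j:ℕ) + 3 := by
              have : ((j:ℕ) : ℝ) + 1 ≤ ((i:ℕ) : ℝ) := by exact_mod_cast h
              linarith
            nlinarith [hj2, hi1, hG'pos]
          rw [abs_of_pos (by linarith)]
          linarith
      rw [Function.onFun, Set.disjoint_left]
      intro y hyi hyj
      simp only [hSlab, Set.mem_setOf_eq] at hyi hyj
      have := abs_sub_abs_le_abs_sub (z i k - y k) (z j k - y k)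
      have habs : |z i k - z j k| ≤ |y k - z i k| + |y k - z j k| := by
        have h1 : z i k - z j k = (z i k - y k) + (y k - z j k) := by ring
        rw [h1]
        calc |(z i k - y k) + (y k - z j k)| ≤ |z i k - y k| + |y k - z j k| := abs_add_le _ _
          _ = |y k - z i k| + |y k - z j k| := by rw [abs_sub_comm]
      linarith
    have hSlabmass : ∀ i, m₀ ≤ ρ (Slab i) := by
      intro i
      refine le_trans (hmass _ (hzsupp i)) (measure_mono ?_)
      intro y hy
      simp only [hSlab, Set.mem_setOf_eq]
      have h1 : |y k - z i k| = |(y - z i) k| := by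
        rw [PiLp.sub_apply]
      rw [h1]
      refine le_trans (ub_abs_coord_le_norm _ k) ?_
      rw [← dist_eq_norm]
      exact Metric.mem_closedBall.mp hy
    have hsum : (n : ℝ≥0∞) * m₀ ≤ 1 := by
      have h1 : ρ (⋃ i, Slab i) = ∑' i, ρ (Slab i) := measure_iUnion hSlabdisj hSlabm
      have h2 : ∑' i : Fin n, ρ (Slab i) ≥ ∑' _ : Fin n, m₀ := by
        exact Summable.tsum_le_tsum (fun i => hSlabmass i) ENNReal.summable ENNReal.summable
      have h3 : ∑' _ : Fin n, m₀ = (n : ℝ≥0∞) * m₀ := by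
        rw [tsum_fintype]
        simp [Finset.sum_const, nsmul_eq_mul]
      calc (n : ℝ≥0∞) * m₀ = ∑' _ : Fin n, m₀ := h3.symm
        _ ≤ ∑' i : Fin n, ρ (Slab i) := h2
        _ = ρ (⋃ i, Slab i) := h1.symm
        _ ≤ ρ Set.univ := measure_mono (Set.subset_univ _)
        _ = 1 := measure_univ
    exact absurd hsum (not_le.mpr hn)
  · -- gap: surgery contradiction
    push_neg at hall
    obtain ⟨i, hgap⟩ := hall
    set a := t₀ + (2 * (i : ℕ) + 1) * G' with ha
    have hIcc : ∀ z' ∈ msupport ρ, z' k ∉ Set.Icc a (a + G') := by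
      intro z' hz'
      have := hgap z' hz'
      have heq : t₀ + (2 * (i:ℕ) + 2) * G' = a + G' := by rw [ha]; ring
      rwa [heq] at this
    set S₁ : Set (Ed d) := {x | x k ≤ a} with hS₁
    set S₂ : Set (Ed d) := {x | a + G' ≤ x k} with hS₂
    have h1c : IsClosed S₁ := IsClosed.preimage (ub_coord_continuous k) isClosed_Iic
    have h2c : IsClosed S₂ := IsClosed.preimage (ub_coord_continuous k) isClosed_Ici
    have hdisj : Disjoint S₁ S₂ := by
      rw [Set.disjoint_left]
      intro x hx1 hx2
      simp only [hS₁, hS₂, Set.mem_setOf_eq] at hx1 hx2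
      linarith
    have hcover : msupport ρ ⊆ S₁ ∪ S₂ := by
      intro x hx
      have h := hIcc x hx
      rw [Set.mem_Icc, not_and_or, not_le, not_le] at h
      rcases h with h | h
      · exact Or.inl (le_of_lt h)
      · exact Or.inr (le_of_lt h)
    -- the two sides have positive mass
    have hta : t₀ < a := by
      rw [ha]
      nlinarith [hG'pos, (i : ℕ).cast_nonneg (α := ℝ)]
    have hat : a + G' < t₁ := by
      have hin : ((i : ℕ) : ℝ) ≤ (n : ℝ) - 1 := by
        have := i.2
        have : ((i : ℕ) : ℝ) + 1 ≤ (n : ℝ) := by exact_mod_cast i.2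
        linarith
      have : a + G' ≤ t₀ + (2 * (n:ℝ)) * G' := by
        rw [ha]
        nlinarith [hG'pos]
      calc a + G' ≤ t₀ + (2 * (n:ℝ)) * G' := this
        _ < t₀ + (2 * (n:ℝ) + 2) * G' := by nlinarith [hG'pos]
        _ < t₁ := by
            have := hcon
            push_cast at this ⊢
            linarith
    have hm1 : ρ S₁ ≠ 0 := by
      have hb : Metric.ball xb (a - t₀) ⊆ S₁ := by
        intro y hy
        simp only [hS₁, Set.mem_setOf_eq]
        have h1 : |y k - xb k| ≤ ‖y - xb‖ := by
          rw [← PiLp.sub_apply]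
          exact ub_abs_coord_le_norm _ k
        rw [← dist_eq_norm] at h1
        have h2 := Metric.mem_ball.mp hy
        have := abs_le.mp (h1.trans h2.le)
        linarith [this.2]
      have := hxb _ Metric.isOpen_ball (Metric.mem_ball_self (show (0:ℝ) < a - t₀ by linarith))
      exact fun h0 => absurd (measure_mono_null hb h0) this.ne'
    have hm2 : ρ S₂ ≠ 0 := by
      have hb : Metric.ball yb (t₁ - (a + G')) ⊆ S₂ := by
        intro y hy
        simp only [hS₂, Set.mem_setOf_eq]
        have h1 : |y k - yb k| ≤ ‖y - yb‖ := by
          rw [← PiLp.sub_apply]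
          exact ub_abs_coord_le_norm _ k
        rw [← dist_eq_norm] at h1
        have h2 := Metric.mem_ball.mp hy
        have := abs_le.mp (h1.trans h2.le)
        linarith [this.1]
      have := hyb _ Metric.isOpen_ball
        (Metric.mem_ball_self (show (0:ℝ) < t₁ - (a + G') by linarith))
      exact fun h0 => absurd (measure_mono_null hb h0) this.ne'
    -- the strict decrease of g under a unit shift in the gap direction
    have hshift : ∀ w : Ed d, R₆ + 1 ≤ w k → g (w - EuclideanSpace.single k 1) < g w := by
      intro w hw
      have hsk : (EuclideanSpace.single k 1 : Ed d) k = 1 := by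
        rw [ub_single_coord]
        simp
      apply hg6 k
      · intro j hj
        rw [PiLp.sub_apply, ub_single_coord]
        simp [hj]
      · rw [PiLp.sub_apply, hsk]
        linarith
      · rw [PiLp.sub_apply, hsk]
        linarith
    by_cases hc : 1 ≤ a + G'
    · -- move the upper part S₂ down by e = single k 1
      refine ub_surgery hg hgsym hball hmin hJfin h1c h2c hdisj hcover hm1 hm2
        (EuclideanSpace.single k 1) ?_ ?_
      · intro x hx
        have hxk : a + G' ≤ x k := hx.2
        have hxR : ‖x‖ ≤ R := by
          have := hball hx.1
          rwa [Metric.mem_closedBall, dist_zero_right] at this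
        exact ub_norm_sub_single_le x k 1 (Or.inl rfl) hxR (by rw [one_mul]; linarith)
      · intro x hx2 y hy1
        simp only [hS₁, hS₂, Set.mem_setOf_eq] at hx2 hy1
        have hw : R₆ + 1 ≤ (x - y) k := by
          rw [PiLp.sub_apply]
          linarith
        have heq : x - EuclideanSpace.single k 1 - y = (x - y) - EuclideanSpace.single k 1 := by
          abel
        rw [heq]
        exact hshift _ hw
    · -- move the lower part S₁ up by e = single k (-1)
      push_neg at hc
      have hale : a ≤ -1 := by linarith
      refine ub_surgery hg hgsym hball hmin hJfin h2c h1c hdisj.symm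
        (by rw [Set.union_comm]; exact hcover) hm2 hm1
        (EuclideanSpace.single k (-1)) ?_ ?_
      · intro x hx
        have hxk : x k ≤ a := hx.2
        have hxR : ‖x‖ ≤ R := by
          have := hball hx.1
          rwa [Metric.mem_closedBall, dist_zero_right] at this
        exact ub_norm_sub_single_le x k (-1) (Or.inr rfl) hxR (by nlinarith)
      · intro x hx1 y hy2
        simp only [hS₁, hS₂, Set.mem_setOf_eq] at hx1 hy2
        have key : g ((y - x) - EuclideanSpace.single k 1) < g (y - x) := by
          apply hshift
          rw [PiLp.sub_apply]
          linarith
        have he1 : x - EuclideanSpace.single k (-1) - y =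
            -((y - x) - EuclideanSpace.single k 1) := by
          have : (EuclideanSpace.single k (-1) : Ed d) = -EuclideanSpace.single k 1 := by
            ext j
            rw [ub_single_coord]
            simp only [PiLp.neg_apply, ub_single_coord]
            split <;> simp
          rw [this]
          abel
        have he2 : x - y = -(y - x) := by abel
        rw [he1, he2, hgsym, hgsym]
        exact key

variable {d : ℕ}

lemma ub_sub_nonneg {y : EReal} {c : ℝ} (h : (c : EReal) ≤ y) : 0 ≤ y - (c : EReal) := by
  induction y with
  | bot => exact absurd h (by simp)
  | coe r =>
      rw [← EReal.coe_sub]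
      exact EReal.coe_nonneg.mpr (by linarith [EReal.coe_le_coe_iff.mp h])
  | top => rw [EReal.top_sub_coe]; exact le_top

lemma ub_sub_ne_top {y : EReal} (c : ℝ) (h : y ≠ ⊤) : y - (c : EReal) ≠ ⊤ := by
  induction y with
  | bot => rw [EReal.bot_sub]; exact bot_ne_top
  | coe r => rw [← EReal.coe_sub]; exact EReal.coe_ne_top _
  | top => exact absurd rfl h

lemma ub_g_strict {W : Ed d → EReal} {Wmin : ℝ} (hbound : ∀ x, (Wmin : EReal) ≤ W x)
    {z z' : Ed d} (h : W z < W z') :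
    (W z - (Wmin : EReal)).posPart < (W z' - (Wmin : EReal)).posPart := by
  apply ub_posPart_strict (ub_sub_nonneg (hbound z)) (ub_sub_ne_top _ h.ne_top)
  exact EReal.sub_lt_sub_of_lt_of_le h le_rfl (EReal.coe_ne_bot _) (EReal.coe_ne_top _)

lemma ub_g_far {W : Ed d → EReal} {Wmin : ℝ} (c : ℝ) {z : Ed d} (h : (c : EReal) ≤ W z) :
    ENNReal.ofReal (c - Wmin) ≤ (W z - (Wmin : EReal)).posPart := by
  rw [← ub_posPart_coe, show ((c - Wmin : ℝ) : EReal) = (c : EReal) - (Wmin : ℝ) from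
    EReal.coe_sub _ _]
  exact ub_posPart_mono (EReal.sub_le_sub h le_rfl)

lemma ub_Jit_smul {g : Ed d → ℝ≥0∞} (hg : Measurable g) (μ : Measure (Ed d)) [SFinite μ]
    (c : ℝ≥0∞) : Jit g (c • μ) = c * (c * Jit g μ) := by
  rw [Jit, Jit, lintegral_smul_measure]
  congr 1
  calc ∫⁻ x, (∫⁻ y, g (x - y) ∂(c • μ)) ∂μ = ∫⁻ x, c * (∫⁻ y, g (x - y) ∂μ) ∂μ := by
        congr 1; funext x; rw [lintegral_smul_measure, smul_eq_mul]
    _ = c * Jit g μ := lintegral_const_mul _ (ub_psi_meas hg μ)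

lemma ub_Jit_restrict_le (g : Ed d → ℝ≥0∞) (μ : Measure (Ed d)) (S : Set (Ed d)) :
    Jit g (μ.restrict S) ≤ Jit g μ := by
  rw [Jit, Jit]
  apply lintegral_mono' Measure.restrict_le_self
  intro x
  exact lintegral_mono' Measure.restrict_le_self le_rfl

lemma ub_norm_le_of_coords {z : Ed d} {L : ℝ} (hL : 0 ≤ L) (h : ∀ k, |z k| ≤ L) :
    ‖z‖ ≤ Real.sqrt d * L := by
  rw [EuclideanSpace.norm_eq]
  have h1 : ∑ i, ‖z i‖ ^ 2 ≤ (d : ℝ) * L ^ 2 := by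
    calc ∑ i, ‖z i‖ ^ 2 ≤ ∑ _i : Fin d, L ^ 2 := by
          apply Finset.sum_le_sum
          intro i _
          rw [Real.norm_eq_abs]
          exact pow_le_pow_left₀ (abs_nonneg _) (h i) 2
      _ = (d : ℝ) * L ^ 2 := by
          rw [Finset.sum_const, Finset.card_univ, Fintype.card_fin, nsmul_eq_mul]
  calc Real.sqrt (∑ i, ‖z i‖ ^ 2) ≤ Real.sqrt ((d : ℝ) * L ^ 2) := Real.sqrt_le_sqrt h1
    _ = Real.sqrt d * L := by
        rw [Real.sqrt_mul (Nat.cast_nonneg d), Real.sqrt_sq hL]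


variable {d : ℕ}

lemma ub_bridge {W : Ed d → EReal} (hW : Measurable W) {Wmin : ℝ} (hWmin : Wmin < 0)
    (hbound : ∀ x, (Wmin : EReal) ≤ W x) (ρ μ : Measure (Ed d)) [IsProbabilityMeasure ρ]
    [IsProbabilityMeasure μ] :
    energy W ρ ≤ energy W μ ↔
      Jit (fun z => (W z - (Wmin : EReal)).posPart) ρ ≤
        Jit (fun z => (W z - (Wmin : EReal)).posPart) μ := by
  rw [ub_energy_eq hW hWmin hbound ρ, ub_energy_eq hW hWmin hbound μ]
  rw [ub_half_strictMono.le_iff_le]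
  have hsm : StrictMono (fun x : EReal => x + (Wmin : EReal)) :=
    fun a b h => EReal.add_lt_add_right_coe h Wmin
  rw [hsm.le_iff_le]
  exact EReal.coe_ennreal_le_coe_ennreal_iff

theorem ub_main (hd : 1 ≤ d) (W : Ed d → EReal) (hWmeas : Measurable W)
    (Wmin : ℝ) (hWmin : Wmin < 0) (hbound : ∀ x, (Wmin : EReal) ≤ W x)
    (hsym : ∀ x, W (-x) = W x)
    (Winf : EReal) (hlim : Tendsto W (cocompact (Ed d)) (nhds Winf))
    (hunst : ∃ ρ : Measure (Ed d), IsProbabilityMeasure ρ ∧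
      energy W ρ < ((1 / 2 : ℝ) : EReal) * Winf)
    (R₆ : ℝ) (hR₆ : 0 < R₆)
    (hgrow : ∀ (k : Fin d) (x y : Ed d), (∀ j, j ≠ k → x j = y j) →
      R₆ ≤ x k → x k < y k → W x < W y) :
    ∃ K : ℝ, 0 < K ∧ ∀ R : ℝ, 0 ≤ R → ∀ ρR : Measure (Ed d), IsMinimiserOn W ρR R →
      EMetric.diam (msupport ρR) ≤ ENNReal.ofReal K := by
  classical
  obtain ⟨ρ₀, hρ₀prob, hρ₀E⟩ := hunst
  haveI := hρ₀prob
  set g : Ed d → ℝ≥0∞ := fun z => (W z - (Wmin : EReal)).posPart with hgdef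
  have hgmeas : Measurable g := ub_gmeas hWmeas Wmin
  have hgsym : ∀ z, g (-z) = g z := by
    intro z
    simp only [hgdef]
    rw [hsym]
  have hg6 : ∀ (k : Fin d) (z z' : Ed d), (∀ j, j ≠ k → z j = z' j) →
      R₆ ≤ z k → z k < z' k → g z < g z' := by
    intro k z z' hoff h1 h2
    exact ub_g_strict hbound (hgrow k z z' hoff h1 h2)
  -- energy of the unstable measure in J-terms
  set J₀ := Jit g ρ₀ with hJ₀def
  have hJ₀lt : ((J₀ : ℝ≥0∞) : EReal) + (Wmin : EReal) < Winf := by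
    rw [ub_energy_eq hWmeas hWmin hbound ρ₀] at hρ₀E
    exact ub_half_strictMono.lt_iff_lt.mp hρ₀E
  have hJ₀top : J₀ ≠ ⊤ := by
    intro h
    rw [h, EReal.coe_ennreal_top, EReal.top_add_coe] at hJ₀lt
    exact not_top_lt hJ₀lt
  -- choose the threshold value c
  obtain ⟨z, hz1, hz2⟩ := exists_between hJ₀lt
  have hzbot : z ≠ ⊥ := by
    intro h
    rw [h] at hz1
    exact not_lt_bot hz1
  have hztop : z ≠ ⊤ := (hz2.trans_le le_top).ne_top
  set c := z.toReal with hcdef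
  have hzc : z = (c : EReal) := (EReal.coe_toReal hztop hzbot).symm
  rw [hzc] at hz1 hz2
  have hWminc : Wmin < c := by
    have h0 : (Wmin : EReal) ≤ ((J₀ : ℝ≥0∞) : EReal) + (Wmin : EReal) := by
      conv_lhs => rw [show (Wmin : EReal) = 0 + (Wmin : EReal) by rw [zero_add]]
      exact add_le_add_left (EReal.coe_ennreal_nonneg J₀) _
    exact EReal.coe_lt_coe_iff.mp (h0.trans_lt hz1)
  set c' := ENNReal.ofReal (c - Wmin) with hc'def
  have hc'0 : c' ≠ 0 := (ENNReal.ofReal_pos.mpr (by linarith)).ne'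
  have hc'top : c' ≠ ⊤ := ENNReal.ofReal_ne_top
  set j := J₀.toReal with hjdef
  have hj0 : 0 ≤ j := ENNReal.toReal_nonneg
  have hjc : j + Wmin < c := by
    rw [ub_coe_toReal hJ₀top, ← EReal.coe_add] at hz1
    exact EReal.coe_lt_coe_iff.mp hz1
  have hJ₀c' : J₀ < c' := by
    rw [← ENNReal.ofReal_toReal hJ₀top, hc'def]
    exact (ENNReal.ofReal_lt_ofReal_iff (by linarith)).mpr (by linarith)
  -- choose the far radius A
  have hmemIoi : W ⁻¹' (Set.Ioi ((c : ℝ) : EReal)) ∈ cocompact (Ed d) :=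
    hlim (Ioi_mem_nhds hz2)
  obtain ⟨t, htc, htsub⟩ := mem_cocompact.mp hmemIoi
  obtain ⟨r, hr⟩ := htc.isBounded.subset_closedBall 0
  set A := max r 0 + 1 with hAdef
  have hA1 : 1 ≤ A := by
    have : (0:ℝ) ≤ max r 0 := le_max_right r 0
    linarith
  have hfar : ∀ z : Ed d, A ≤ ‖z‖ → c' ≤ g z := by
    intro w hw
    have hwt : w ∉ t := by
      intro hmem
      have := hr hmem
      rw [Metric.mem_closedBall, dist_zero_right] at this
      have : A ≤ r := hw.trans this
      have : r ≤ max r 0 := le_max_left r 0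
      linarith [hA1]
    have := htsub hwt
    simp only [Set.mem_preimage, Set.mem_Ioi] at this
    exact ub_g_far c this.le
  -- truncation: a compactly supported measure with small energy
  have hβtend : Tendsto (fun m : ℕ => ρ₀ (Metric.closedBall (0 : Ed d) m)) atTop (nhds 1) := by
    have hmono : Monotone (fun m : ℕ => Metric.closedBall (0 : Ed d) m) := by
      intro a b hab
      exact Metric.closedBall_subset_closedBall (by exact_mod_cast hab)
    have := tendsto_measure_iUnion_atTop (μ := ρ₀) hmono
    rwa [Metric.iUnion_closedBall_nat, measure_univ] at this
  set cc := c - Wmin with hccdef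
  have hccpos : 0 < cc := by rw [hccdef]; linarith
  have hjcc : j < cc := by rw [hccdef]; linarith
  set θ := Real.sqrt ((j / cc + 1) / 2) with hθdef
  have hjcc01 : 0 ≤ j / cc ∧ j / cc < 1 :=
    ⟨div_nonneg hj0 hccpos.le, (div_lt_one hccpos).mpr hjcc⟩
  have hθsq : θ ^ 2 = (j / cc + 1) / 2 := Real.sq_sqrt (by linarith [hjcc01.1])
  have hθpos : 0 < θ := Real.sqrt_pos.mpr (by linarith [hjcc01.1])
  have hθlt1 : θ < 1 := by nlinarith [hθsq, hjcc01.2, hθpos]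
  have hθgt : j / cc < θ ^ 2 := by rw [hθsq]; linarith [hjcc01.2]
  obtain ⟨m, hm⟩ := (hβtend.eventually (Ioi_mem_nhds (show ENNReal.ofReal θ < 1 by
    rw [← ENNReal.ofReal_one]
    exact (ENNReal.ofReal_lt_ofReal_iff one_pos).mpr hθlt1))).exists
  set β := ρ₀ (Metric.closedBall (0 : Ed d) m) with hβdef
  have hmβ : ENNReal.ofReal θ < β := hm
  have hβ0 : β ≠ 0 := ((ENNReal.ofReal_pos.mpr hθpos).trans hmβ).ne'
  have hβtop : β ≠ ⊤ := (measure_lt_top ρ₀ _).ne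
  set ν := β⁻¹ • ρ₀.restrict (Metric.closedBall (0 : Ed d) m) with hνdef
  have hνprob : IsProbabilityMeasure ν := by
    constructor
    rw [hνdef, Measure.smul_apply, Measure.restrict_apply_univ, smul_eq_mul,
      ENNReal.inv_mul_cancel hβ0 hβtop]
  haveI := hνprob
  have hνball : InBall ν (m : ℝ) := by
    refine subset_trans (ub_msupport_smul _ _) ?_
    exact ub_msupport_restrict_closed _ Metric.isClosed_closedBall
  have hJν : Jit g ν < c' := by
    have h1 : Jit g ν ≤ β⁻¹ * (β⁻¹ * J₀) := by
      rw [hνdef, ub_Jit_smul hgmeas _ β⁻¹]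
      exact mul_le_mul_right (mul_le_mul_right (ub_Jit_restrict_le g ρ₀ _) _) _
    have h2 : β⁻¹ ≤ (ENNReal.ofReal θ)⁻¹ := ENNReal.inv_le_inv' hmβ.le
    have h3 : (ENNReal.ofReal θ)⁻¹ = ENNReal.ofReal θ⁻¹ :=
      (ENNReal.ofReal_inv_of_pos hθpos).symm
    have h4 : J₀ = ENNReal.ofReal j := (ENNReal.ofReal_toReal hJ₀top).symm
    calc Jit g ν ≤ β⁻¹ * (β⁻¹ * J₀) := h1
      _ ≤ (ENNReal.ofReal θ)⁻¹ * ((ENNReal.ofReal θ)⁻¹ * J₀) :=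
          mul_le_mul' h2 (mul_le_mul' h2 le_rfl)
      _ = ENNReal.ofReal (θ⁻¹ * (θ⁻¹ * j)) := by
          rw [h3, h4, ← ENNReal.ofReal_mul (by positivity), ← ENNReal.ofReal_mul (by positivity)]
      _ < ENNReal.ofReal cc := by
          apply (ENNReal.ofReal_lt_ofReal_iff hccpos).mpr
          have hθ2 : (0:ℝ) < θ ^ 2 := by positivity
          have h5 : j < θ ^ 2 * cc := (div_lt_iff₀ hccpos).mp hθgt
          have h6 : θ⁻¹ * (θ⁻¹ * j) = j / θ ^ 2 := by
            rw [pow_two]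
            field_simp
          rw [h6, div_lt_iff₀ hθ2]
          nlinarith [h5]
      _ = c' := rfl
  -- choose n
  set m₀ := 1 - Jit g ν / c' with hm₀def
  have hm₀0 : m₀ ≠ 0 := by
    have hdiv : Jit g ν / c' < 1 := by
      rw [ENNReal.div_lt_iff (Or.inl hc'0) (Or.inl hc'top), one_mul]
      exact hJν
    rw [hm₀def]
    exact (tsub_pos_of_lt hdiv).ne'
  have hm₀top : m₀ ≠ ⊤ := by
    rw [hm₀def]
    exact (tsub_le_self.trans_lt (lt_top_iff_ne_top.mpr ENNReal.one_ne_top)).ne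
  obtain ⟨n, hnn⟩ := ENNReal.exists_nat_gt (ENNReal.inv_ne_top.mpr hm₀0)
  have hn : 1 < (n : ℝ≥0∞) * m₀ := by
    rw [← ENNReal.inv_mul_cancel hm₀0 hm₀top]
    exact ENNReal.mul_lt_mul_left hm₀0 hm₀top hnn
  -- the global constants
  set G' := max (2 * A + 4) (R₆ + 3) with hG'def
  have hG1 : 2 * A + 4 ≤ G' := le_max_left _ _
  have hG2 : R₆ + 3 ≤ G' := le_max_right _ _
  have hG'pos : 0 < G' := lt_of_lt_of_le (by linarith) hG1
  set L := (2 * (n : ℝ) + 2) * G' with hLdef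
  have hL0 : 0 ≤ L := by positivity
  set R₀ := (m : ℝ) with hR₀def
  set K := max (2 * R₀) (Real.sqrt d * L) + 1 with hKdef
  have hKpos : 0 < K := by
    have h1 : (0:ℝ) ≤ 2 * R₀ := by positivity
    have := le_max_left (2 * R₀) (Real.sqrt d * L)
    linarith
  refine ⟨K, hKpos, ?_⟩
  intro R hR ρR hminOn
  obtain ⟨hprobR, hballR, hminE⟩ := hminOn
  haveI := hprobR
  have hminJ : ∀ μ : Measure (Ed d), IsProbabilityMeasure μ → InBall μ R →
      Jit g ρR ≤ Jit g μ := by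
    intro μ hμ hb
    haveI := hμ
    exact (ub_bridge hWmeas hWmin hbound ρR μ).mp (hminE μ hμ hb)
  apply EMetric.diam_le
  intro x hx y hy
  rw [edist_dist]
  apply ENNReal.ofReal_le_ofReal
  rcases le_or_gt R R₀ with hRcase | hRcase
  · -- small R : support in a small ball
    have hx' := hballR hx
    have hy' := hballR hy
    rw [Metric.mem_closedBall] at hx' hy'
    calc dist x y ≤ dist x 0 + dist 0 y := dist_triangle _ _ _
      _ = dist x 0 + dist y 0 := by rw [dist_comm 0 y]
      _ ≤ R + R := add_le_add hx' hy'
      _ ≤ 2 * R₀ := by linarith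
      _ ≤ K := by
          rw [hKdef]
          linarith [le_max_left (2 * R₀) (Real.sqrt d * L)]
  · -- large R : apply the coordinate bound
    have hJle : Jit g ρR ≤ Jit g ν := by
      apply hminJ ν hνprob
      intro w hw
      exact Metric.closedBall_subset_closedBall hRcase.le (hνball hw)
    have hcoords : ∀ k : Fin d, |x k - y k| ≤ L := by
      intro k
      have h1 := ub_coord_bound hgmeas hgsym hR₆ hg6 hc'0 hc'top hA1 hfar hJν hn hG1 hG2
        hballR hminJ hJle k y x hy hx
      have h2 := ub_coord_bound hgmeas hgsym hR₆ hg6 hc'0 hc'top hA1 hfar hJν hn hG1 hG2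
        hballR hminJ hJle k x y hx hy
      rw [abs_le]
      constructor
      · push_cast at h2 ⊢
        rw [hLdef]
        push_cast
        linarith
      · push_cast at h1 ⊢
        rw [hLdef]
        push_cast
        linarith
    have hnorm : dist x y ≤ Real.sqrt d * L := by
      rw [dist_eq_norm]
      apply ub_norm_le_of_coords hL0
      intro k
      rw [PiLp.sub_apply]
      exact hcoords k
    calc dist x y ≤ Real.sqrt d * L := hnorm
      _ ≤ K := by
          rw [hKdef]
          linarith [le_max_right (2 * R₀) (Real.sqrt d * L)]


end UBhelpers

/-- **Lemma (uniform bound on the support of minimisers).** Under Hypotheses (H1)–(H6)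
there exists `K > 0`, depending only on `W` and `d`, such that for every `R ≥ 0` and every
global minimiser `ρR` of the energy on `P_R(ℝ^d)`, the diameter of the support of `ρR` is
at most `K`. -/
theorem uniform_support_diameter_bound
    {d : ℕ} (hd : 1 ≤ d) (W : Ed d → EReal) (hWmeas : Measurable W)
    (Wmin : ℝ) (hWmin : Wmin < 0) (hbound : ∀ x, (Wmin : EReal) ≤ W x)
    (hloc : ∀ (x : Ed d) (r : ℝ), 0 < r →
      ∫⁻ y in Metric.ball x r, (W y).abs ∂volume < ⊤)
    (hsym : ∀ x, W (-x) = W x)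
    (Winf : EReal) (hlim : Tendsto W (cocompact (Ed d)) (nhds Winf))
    (hunst : ∃ ρ : Measure (Ed d), IsProbabilityMeasure ρ ∧
      energy W ρ < ((1 / 2 : ℝ) : EReal) * Winf)
    (hlsc : LowerSemicontinuous W)
    (R₆ : ℝ) (hR₆ : 0 < R₆)
    (hgrow : ∀ (k : Fin d) (x y : Ed d), (∀ j, j ≠ k → x j = y j) →
      R₆ ≤ x k → x k < y k → W x < W y) :
    ∃ K : ℝ, 0 < K ∧ ∀ R : ℝ, 0 ≤ R → ∀ ρR : Measure (Ed d), IsMinimiserOn W ρR R →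
      EMetric.diam (msupport ρR) ≤ ENNReal.ofReal K := by
  exact ub_main hd W hWmeas Wmin hWmin hbound hsym Winf hlim hunst R₆ hR₆ hgrow
end

section
/- Let d ≥ 1 and let W : ℝ^d → ℝ ∪ {+∞} satisfy Hypotheses (H1)–(H5), and let ρ ∈ P(ℝ^d) be a global minimiser of the interaction energy E. Then there exist constants r'' > 0 and m' > 0 such that ρ(B(x₀, r'')) ≥ m' for every point x₀ in the support of ρ; in particular one may take m' = (A' − E(ρ))/(A' − W_min/2) for any A' with E(ρ) < A' < (1/2)W_∞. -/
open MeasureTheory Filter Metric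
open scoped ENNReal

namespace ULM
open Set


lemma posPart_coe (c : ℝ) : EReal.posPart (c : EReal) = ENNReal.ofReal c := by
  unfold EReal.posPart
  rcases le_total c 0 with h | h
  · rw [sup_eq_right.2 (by exact_mod_cast h), ENNReal.ofReal_eq_zero.2 h, EReal.abs_zero]
  · rw [sup_eq_left.2 (by exact_mod_cast h), EReal.abs_def]
    rw [abs_of_nonneg h]

lemma posPart_top : EReal.posPart ⊤ = ⊤ := by
  unfold EReal.posPart
  rw [sup_eq_left.2 le_top]; rfl

lemma abs_le_abs_of_nonneg : ∀ {a b : EReal}, 0 ≤ a → a ≤ b → a.abs ≤ b.abs := by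
  intro a b h0 h1
  induction b with
  | bot =>
    rw [le_bot_iff.mp h1]
  | coe y =>
    induction a with
    | bot => simp at h0
    | coe x =>
      rw [EReal.abs_def, EReal.abs_def]
      have hx : (0:ℝ) ≤ x := by exact_mod_cast h0
      have hxy : x ≤ y := by exact_mod_cast h1
      exact ENNReal.ofReal_le_ofReal (by rw [abs_of_nonneg hx, abs_of_nonneg (hx.trans hxy)]; exact hxy)
    | top => simp at h1
  | top => rw [EReal.abs_top]; exact le_top

lemma posPart_mono : Monotone EReal.posPart := by
  intro x y h
  exact abs_le_abs_of_nonneg le_sup_right (sup_le_sup_right h 0)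

lemma posPart_le_coe {x : EReal} {c : ℝ} (h : x ≤ (c : EReal)) :
    EReal.posPart x ≤ ENNReal.ofReal c := by
  rw [← posPart_coe]; exact posPart_mono h

lemma coe_ennreal_eq {m : ℝ≥0∞} (hm : m ≠ ⊤) : (m : EReal) = ((m.toReal : ℝ) : EReal) := by
  conv_lhs => rw [← ENNReal.ofReal_toReal hm]
  rw [EReal.coe_ennreal_ofReal, max_eq_left ENNReal.toReal_nonneg]

lemma toReal_ofReal_mul_sub (c : ℝ) {m : ℝ≥0∞} (hm : m ≠ ⊤) :
    (ENNReal.ofReal c * m).toReal - (ENNReal.ofReal (-c) * m).toReal = c * m.toReal := by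
  rcases le_total 0 c with h | h
  · rw [(ENNReal.ofReal_eq_zero.2 (neg_nonpos.mpr h) : ENNReal.ofReal (-c) = 0), zero_mul,
      ENNReal.toReal_zero, ENNReal.toReal_mul, ENNReal.toReal_ofReal h]; ring
  · rw [ENNReal.ofReal_eq_zero.2 h, zero_mul, ENNReal.toReal_zero,
      ENNReal.toReal_mul, ENNReal.toReal_ofReal (by linarith : (0:ℝ) ≤ -c)]; ring

lemma isFiniteMeasure_smul {α : Type*} [MeasurableSpace α] (μ : Measure α) [IsFiniteMeasure μ]
    {c : ℝ≥0∞} (hc : c ≠ ⊤) : IsFiniteMeasure (c • μ) := by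
  constructor
  rw [Measure.smul_apply, smul_eq_mul]
  exact ENNReal.mul_lt_top hc.lt_top (measure_lt_top μ _)

lemma prod_smul_smul {α β : Type*} [MeasurableSpace α] [MeasurableSpace β]
    (μ : Measure α) (ν : Measure β) [IsFiniteMeasure μ] [IsFiniteMeasure ν]
    {c e : ℝ≥0∞} (hc : c ≠ ⊤) (he : e ≠ ⊤) :
    (c • μ).prod (e • ν) = (c * e) • (μ.prod ν) := by
  haveI := isFiniteMeasure_smul μ hc
  haveI := isFiniteMeasure_smul ν he
  refine Measure.prod_eq fun s t hs ht => ?_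
  simp only [Measure.smul_apply, smul_eq_mul, Measure.prod_prod]
  ring

lemma le_of_forall_small (X Y K : ℝ) (h : ∀ s : ℝ, 0 < s → s < 1 → X ≤ Y + s * K) : X ≤ Y := by
  by_contra hc
  push_neg at hc
  have hK : 0 < K := by
    by_contra hK
    push_neg at hK
    have := h (1/2) (by norm_num) (by norm_num)
    nlinarith
  set s := min (1/2) ((X - Y) / (2 * K)) with hs_def
  have hs0 : 0 < s := lt_min (by norm_num) (div_pos (by linarith) (by linarith))
  have hs := h s hs0 (lt_of_le_of_lt (min_le_left _ _) (by norm_num))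
  have h2 : s * K ≤ (X - Y) / 2 := by
    calc s * K ≤ ((X - Y) / (2 * K)) * K := mul_le_mul_of_nonneg_right (min_le_right _ _) hK.le
    _ = (X - Y) / 2 := by field_simp
  linarith

variable {α : Type*} [MeasurableSpace α]

noncomputable def PP (π : Measure α) (f : α → EReal) : ℝ≥0∞ := ∫⁻ x, (f x).posPart ∂π
noncomputable def NN (π : Measure α) (f : α → EReal) : ℝ≥0∞ := ∫⁻ x, (-f x).posPart ∂π
noncomputable def jj (π : Measure α) (f : α → EReal) : ℝ := (PP π f).toReal - (NN π f).toReal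

lemma eInt_eq {π : Measure α} {f : α → EReal} (hP : PP π f ≠ ⊤) (hN : NN π f ≠ ⊤) :
    eInt π f = ((jj π f : ℝ) : EReal) := by
  unfold eInt jj PP NN at *
  rw [coe_ennreal_eq hP, coe_ennreal_eq hN, ← EReal.coe_sub]

lemma NN_le {π : Measure α} {f : α → EReal} {Wmin : ℝ}
    (hbound : ∀ x, (Wmin : EReal) ≤ f x) :
    NN π f ≤ ENNReal.ofReal (-Wmin) * π univ := by
  unfold NN
  calc ∫⁻ x, (-f x).posPart ∂π ≤ ∫⁻ _, ENNReal.ofReal (-Wmin) ∂π := by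
        refine lintegral_mono fun x => posPart_le_coe ?_
        rw [EReal.coe_neg]
        exact EReal.neg_le_neg_iff.2 (hbound x)
  _ = ENNReal.ofReal (-Wmin) * π univ := lintegral_const _

lemma NN_ne_top (π : Measure α) [IsFiniteMeasure π] {f : α → EReal} {Wmin : ℝ}
    (hbound : ∀ x, (Wmin : EReal) ≤ f x) : NN π f ≠ ⊤ :=
  ((NN_le hbound).trans_lt (ENNReal.mul_lt_top ENNReal.ofReal_lt_top (measure_lt_top π _))).ne

lemma PP_add (π π' : Measure α) (f : α → EReal) : PP (π + π') f = PP π f + PP π' f :=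
  lintegral_add_measure _ _ _

lemma NN_add (π π' : Measure α) (f : α → EReal) : NN (π + π') f = NN π f + NN π' f :=
  lintegral_add_measure _ _ _

lemma PP_smul (c : ℝ≥0∞) (π : Measure α) (f : α → EReal) : PP (c • π) f = c * PP π f :=
  lintegral_smul_measure _ _

lemma NN_smul (c : ℝ≥0∞) (π : Measure α) (f : α → EReal) : NN (c • π) f = c * NN π f :=
  lintegral_smul_measure _ _

lemma jj_ge (π : Measure α) [IsFiniteMeasure π] (f : α → EReal) {A : Set α}
    (hA : MeasurableSet A) (Wmin c : ℝ) (hWmin : Wmin ≤ 0)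
    (h1 : ∀ x, (Wmin : EReal) ≤ f x) (h2 : ∀ x ∉ A, (c : EReal) ≤ f x)
    (hP : PP π f ≠ ⊤) :
    Wmin * (π A).toReal + c * (π Aᶜ).toReal ≤ jj π f := by
  have hWminA : -f ≤ fun x => ((-Wmin : ℝ) : EReal) := fun x => by
    rw [EReal.coe_neg]; exact EReal.neg_le_neg_iff.2 (h1 x)
  have hPg : ENNReal.ofReal c * π Aᶜ ≤ PP π f := by
    calc ENNReal.ofReal c * π Aᶜ = ∫⁻ x, Aᶜ.indicator (fun _ => ENNReal.ofReal c) x ∂π := by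
          rw [lintegral_indicator hA.compl, setLIntegral_const, mul_comm]
    _ ≤ PP π f := by
        refine lintegral_mono fun x => ?_
        by_cases hx : x ∈ Aᶜ
        · rw [indicator_of_mem hx]
          rw [← posPart_coe]
          exact posPart_mono (h2 x hx)
        · rw [indicator_of_notMem hx]; exact zero_le
  have hNg : NN π f ≤ ENNReal.ofReal (-Wmin) * π A + ENNReal.ofReal (-c) * π Aᶜ := by
    calc NN π f ≤ ∫⁻ x, (A.indicator (fun _ => ENNReal.ofReal (-Wmin)) x
        + Aᶜ.indicator (fun _ => ENNReal.ofReal (-c)) x) ∂π := by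
          refine lintegral_mono fun x => ?_
          by_cases hx : x ∈ A
          · rw [indicator_of_mem hx, indicator_of_notMem (by simpa using hx)]
            rw [add_zero]
            exact posPart_le_coe (hWminA x)
          · rw [indicator_of_notMem hx, indicator_of_mem (by simpa using hx), zero_add]
            refine posPart_le_coe ?_
            rw [(by rw [EReal.coe_neg] : ((-c : ℝ) : EReal) = -(c : EReal))]
            exact EReal.neg_le_neg_iff.2 (h2 x hx)
    _ = ENNReal.ofReal (-Wmin) * π A + ENNReal.ofReal (-c) * π Aᶜ := by
        rw [lintegral_add_left (measurable_const.indicator hA)]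
        rw [lintegral_indicator hA, lintegral_indicator hA.compl,
          setLIntegral_const, setLIntegral_const]
  have hπA : π A ≠ ⊤ := (measure_lt_top π _).ne
  have hπAc : π Aᶜ ≠ ⊤ := (measure_lt_top π _).ne
  have e1 : (ENNReal.ofReal c * π Aᶜ).toReal ≤ (PP π f).toReal :=
    ENNReal.toReal_mono hP hPg
  have e2 : (NN π f).toReal ≤ (ENNReal.ofReal (-Wmin) * π A).toReal
      + (ENNReal.ofReal (-c) * π Aᶜ).toReal := by
    rw [← ENNReal.toReal_add (ENNReal.mul_ne_top ENNReal.ofReal_ne_top hπA)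
      (ENNReal.mul_ne_top ENNReal.ofReal_ne_top hπAc)]
    exact ENNReal.toReal_mono (ENNReal.add_ne_top.2
      ⟨ENNReal.mul_ne_top ENNReal.ofReal_ne_top hπA,
       ENNReal.mul_ne_top ENNReal.ofReal_ne_top hπAc⟩) hNg
  have e3 : (ENNReal.ofReal c * π Aᶜ).toReal - (ENNReal.ofReal (-c) * π Aᶜ).toReal
      = c * (π Aᶜ).toReal := toReal_ofReal_mul_sub c hπAc
  have e4 : (ENNReal.ofReal (-Wmin) * π A).toReal = -Wmin * (π A).toReal := by
    rw [ENNReal.toReal_mul, ENNReal.toReal_ofReal (by linarith : (0:ℝ) ≤ -Wmin)]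
  unfold jj
  linarith

lemma jj_add {α : Type*} [MeasurableSpace α] {π π' : Measure α} {f : α → EReal}
    (hP : PP π f ≠ ⊤) (hP' : PP π' f ≠ ⊤) (hN : NN π f ≠ ⊤) (hN' : NN π' f ≠ ⊤) :
    jj (π + π') f = jj π f + jj π' f := by
  unfold jj
  rw [PP_add, NN_add, ENNReal.toReal_add hP hP', ENNReal.toReal_add hN hN']
  ring

lemma jj_smul {α : Type*} [MeasurableSpace α] (c : ℝ≥0∞) (π : Measure α) (f : α → EReal) :
    jj (c • π) f = c.toReal * jj π f := by
  unfold jj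
  rw [PP_smul, NN_smul, ENNReal.toReal_mul, ENNReal.toReal_mul]
  ring

lemma energy_real {d : ℕ} (W : Ed d → EReal) (Wmin : ℝ) (hWmin : Wmin ≤ 0)
    (hbound : ∀ x, (Wmin : EReal) ≤ W x) (ρ : Measure (Ed d)) [IsProbabilityMeasure ρ]
    (htop : energy W ρ ≠ ⊤) :
    energy W ρ = (((energy W ρ).toReal : ℝ) : EReal) ∧ Wmin / 2 ≤ (energy W ρ).toReal ∧
      PP (ρ.prod ρ) (fun p => W (p.1 - p.2)) ≠ ⊤ := by
  set f : Ed d × Ed d → EReal := fun p => W (p.1 - p.2) with hf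
  have hbf : ∀ z : Ed d × Ed d, (Wmin : EReal) ≤ f z := fun z => hbound _
  have hN : NN (ρ.prod ρ) f ≠ ⊤ := NN_ne_top _ hbf
  have hEdef : energy W ρ = ((1/2 : ℝ) : EReal) * eInt (ρ.prod ρ) f := rfl
  have heInt : eInt (ρ.prod ρ) f
      = ((PP (ρ.prod ρ) f : ℝ≥0∞) : EReal) - ((NN (ρ.prod ρ) f : ℝ≥0∞) : EReal) := rfl
  have hP : PP (ρ.prod ρ) f ≠ ⊤ := by
    intro h
    apply htop
    rw [hEdef, heInt, h, EReal.coe_ennreal_top, coe_ennreal_eq hN, EReal.top_sub_coe]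
    exact EReal.coe_mul_top_of_pos (by norm_num)
  have hrep : energy W ρ = ((1/2 * jj (ρ.prod ρ) f : ℝ) : EReal) := by
    rw [hEdef, eInt_eq hP hN, ← EReal.coe_mul]
  have hEr : (energy W ρ).toReal = 1/2 * jj (ρ.prod ρ) f := by
    rw [hrep, EReal.toReal_coe]
  have hNle : (NN (ρ.prod ρ) f).toReal ≤ -Wmin := by
    have h1 : NN (ρ.prod ρ) f ≤ ENNReal.ofReal (-Wmin) * (ρ.prod ρ) univ := NN_le hbf
    rw [measure_univ, mul_one] at h1
    calc (NN (ρ.prod ρ) f).toReal ≤ (ENNReal.ofReal (-Wmin)).toReal :=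
          ENNReal.toReal_mono ENNReal.ofReal_ne_top h1
    _ = -Wmin := ENNReal.toReal_ofReal (by linarith)
  have hjlow : Wmin ≤ jj (ρ.prod ρ) f := by
    unfold jj
    have : (0:ℝ) ≤ (PP (ρ.prod ρ) f).toReal := ENNReal.toReal_nonneg
    linarith
  refine ⟨by rw [hrep, EReal.toReal_coe], by rw [hEr]; linarith, hP⟩

set_option maxHeartbeats 1000000 in
lemma core {d : ℕ} (W : Ed d → EReal) (Wmin : ℝ) (hWmin : Wmin < 0)
    (hbound : ∀ x, (Wmin : EReal) ≤ W x)
    (ρ : Measure (Ed d)) (hρp : IsProbabilityMeasure ρ)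
    (hmin : ∀ μ : Measure (Ed d), IsProbabilityMeasure μ → energy W ρ ≤ energy W μ)
    (A' r' : ℝ) (hr' : 0 < r')
    (hfar : ∀ z : Ed d, r' ≤ ‖z‖ → ((2 * A' : ℝ) : EReal) ≤ W z)
    (hEA : energy W ρ < (A' : EReal))
    (x₀ : Ed d) (hx₀ : x₀ ∈ msupport ρ) :
    ENNReal.ofReal ((A' - (energy W ρ).toReal) / (A' - Wmin / 2)) ≤ ρ (ball x₀ (r' + 1)) := by
  haveI := hρp
  set f : Ed d × Ed d → EReal := fun p => W (p.1 - p.2) with hf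
  have hbf : ∀ z : Ed d × Ed d, (Wmin : EReal) ≤ f z := fun z => hbound _
  obtain ⟨hrep, hErlow, hPρ⟩ := energy_real W Wmin hWmin.le hbound ρ (ne_top_of_lt hEA)
  set Er : ℝ := (energy W ρ).toReal with hEr
  have hErA : Er < A' := by
    rw [hrep] at hEA
    exact_mod_cast hEA
  -- the ball and restricted measures
  set B : Set (Ed d) := ball x₀ 1 with hB
  have hBmeas : MeasurableSet B := measurableSet_ball
  set ρB : Measure (Ed d) := ρ.restrict B with hρB
  set ρc : Measure (Ed d) := ρ.restrict Bᶜ with hρc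
  have hsum : ρB + ρc = ρ := Measure.restrict_add_restrict_compl hBmeas
  set π11 := ρB.prod ρB with hπ11
  set π12 := ρB.prod ρc with hπ12
  set π21 := ρc.prod ρB with hπ21
  set π22 := ρc.prod ρc with hπ22
  have hprodρ : ρ.prod ρ = π11 + π21 + (π12 + π22) := by
    conv_lhs => rw [← hsum]
    rw [Measure.prod_add, Measure.add_prod, Measure.add_prod]
  -- finiteness
  have hPsplit : PP (ρ.prod ρ) f = PP π11 f + PP π21 f + (PP π12 f + PP π22 f) := by
    rw [hprodρ, PP_add, PP_add, PP_add]
  have hfin := hPsplit ▸ hPρ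
  rw [ENNReal.add_ne_top, ENNReal.add_ne_top, ENNReal.add_ne_top] at hfin
  obtain ⟨⟨hP11, hP21⟩, hP12, hP22⟩ := hfin
  have hN11 : NN π11 f ≠ ⊤ := NN_ne_top _ hbf
  have hN12 : NN π12 f ≠ ⊤ := NN_ne_top _ hbf
  have hN21 : NN π21 f ≠ ⊤ := NN_ne_top _ hbf
  have hN22 : NN π22 f ≠ ⊤ := NN_ne_top _ hbf
  -- real quantities
  set S : ℝ := jj π11 f with hS
  set C1 : ℝ := jj π12 f with hC1
  set C2 : ℝ := jj π21 f with hC2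
  set D : ℝ := jj π22 f with hD
  have hjρ : jj (ρ.prod ρ) f = S + C2 + (C1 + D) := by
    rw [hprodρ, jj_add (by rw [PP_add]; exact ENNReal.add_ne_top.2 ⟨hP11, hP21⟩)
        (by rw [PP_add]; exact ENNReal.add_ne_top.2 ⟨hP12, hP22⟩)
        (by rw [NN_add]; exact ENNReal.add_ne_top.2 ⟨hN11, hN21⟩)
        (by rw [NN_add]; exact ENNReal.add_ne_top.2 ⟨hN12, hN22⟩),
      jj_add hP11 hP21 hN11 hN21, jj_add hP12 hP22 hN12 hN22]
  have hrepρ : energy W ρ = ((1/2 * (S + C2 + (C1 + D)) : ℝ) : EReal) := by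
    have hN : NN (ρ.prod ρ) f ≠ ⊤ := NN_ne_top _ hbf
    have hEdef : energy W ρ = ((1/2 : ℝ) : EReal) * eInt (ρ.prod ρ) f := rfl
    rw [hEdef, eInt_eq hPρ hN, ← EReal.coe_mul, hjρ]
  have h2Er : 2 * Er = S + C2 + (C1 + D) := by
    rw [hEr, hrepρ, EReal.toReal_coe]; ring
  -- p and q
  have hρBtop : ρ B ≠ ⊤ := (measure_lt_top ρ _).ne
  set p : ℝ := (ρ B).toReal with hp
  have hp0 : 0 < p := by
    refine ENNReal.toReal_pos ?_ hρBtop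
    have := hx₀ B isOpen_ball (mem_ball_self one_pos)
    exact this.ne'
  have hp1 : p ≤ 1 := by
    rw [hp, ← ENNReal.toReal_one]
    exact ENNReal.toReal_mono ENNReal.one_ne_top prob_le_one
  set pc : ℝ := (ρ Bᶜ).toReal with hpc
  have hpc0 : 0 ≤ pc := ENNReal.toReal_nonneg
  have hppc : p + pc = 1 := by
    have h := measure_add_measure_compl (μ := ρ) hBmeas
    rw [measure_univ] at h
    rw [hp, hpc, ← ENNReal.toReal_add hρBtop (measure_lt_top ρ _).ne, h, ENNReal.toReal_one]
  set qe : ℝ≥0∞ := ρ (ball x₀ (r' + 1)) with hqe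
  set q : ℝ := qe.toReal with hq
  have hq0 : 0 ≤ q := ENNReal.toReal_nonneg
  -- the family of competitors
  have key : ∀ s : ℝ, 0 < s → s < 1 →
      2 * S + C1 + C2 ≤ 2 * p * (2 * Er) + s * (S - p ^ 2 * (2 * Er)) := by
    intro s hs0 hs1
    have hd : 0 < 1 - s * p := by nlinarith
    set At : ℝ := (1 - s) / (1 - s * p) with hAt
    set Bt : ℝ := 1 / (1 - s * p) with hBt
    have hAt0 : 0 ≤ At := div_nonneg (by linarith) hd.le
    have hBt0 : 0 ≤ Bt := div_nonneg (by linarith) hd.le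
    set as : ℝ≥0∞ := ENNReal.ofReal At with has_def
    set bs : ℝ≥0∞ := ENNReal.ofReal Bt with hbs_def
    have has : as ≠ ⊤ := ENNReal.ofReal_ne_top
    have hbs : bs ≠ ⊤ := ENNReal.ofReal_ne_top
    set M : Measure (Ed d) := as • ρB + bs • ρc with hM
    haveI hF1 : IsFiniteMeasure (as • ρB) := isFiniteMeasure_smul _ has
    haveI hF2 : IsFiniteMeasure (bs • ρc) := isFiniteMeasure_smul _ hbs
    have hMprob : IsProbabilityMeasure M := by
      constructor
      rw [hM, Measure.add_apply, Measure.smul_apply, Measure.smul_apply, smul_eq_mul,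
        smul_eq_mul, hρB, hρc, Measure.restrict_apply_univ, Measure.restrict_apply_univ,
        ← ENNReal.ofReal_toReal hρBtop, ← ENNReal.ofReal_toReal (measure_lt_top ρ Bᶜ).ne,
        ← hp, ← hpc, ← ENNReal.ofReal_mul hAt0, ← ENNReal.ofReal_mul hBt0,
        ← ENNReal.ofReal_add (by positivity) (by positivity)]
      have harith : At * p + Bt * pc = 1 := by
        rw [hAt, hBt, div_mul_eq_mul_div, div_mul_eq_mul_div, ← add_div,
          div_eq_one_iff_eq hd.ne']
        nlinarith [hppc]
      rw [harith, ENNReal.ofReal_one]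
    haveI := hMprob
    have hMM : M.prod M = (as * as) • π11 + (bs * as) • π21
        + ((as * bs) • π12 + (bs * bs) • π22) := by
      rw [hM, Measure.prod_add, Measure.add_prod, Measure.add_prod,
        prod_smul_smul _ _ has has, prod_smul_smul _ _ hbs has,
        prod_smul_smul _ _ has hbs, prod_smul_smul _ _ hbs hbs]
    -- value of jj on M.prod M
    have hPaa : PP ((as * as) • π11) f ≠ ⊤ := by
      rw [PP_smul]; exact ENNReal.mul_ne_top (ENNReal.mul_ne_top has has) hP11
    have hPba : PP ((bs * as) • π21) f ≠ ⊤ := by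
      rw [PP_smul]; exact ENNReal.mul_ne_top (ENNReal.mul_ne_top hbs has) hP21
    have hPab : PP ((as * bs) • π12) f ≠ ⊤ := by
      rw [PP_smul]; exact ENNReal.mul_ne_top (ENNReal.mul_ne_top has hbs) hP12
    have hPbb : PP ((bs * bs) • π22) f ≠ ⊤ := by
      rw [PP_smul]; exact ENNReal.mul_ne_top (ENNReal.mul_ne_top hbs hbs) hP22
    have hNaa : NN ((as * as) • π11) f ≠ ⊤ := by
      rw [NN_smul]; exact ENNReal.mul_ne_top (ENNReal.mul_ne_top has has) hN11
    have hNba : NN ((bs * as) • π21) f ≠ ⊤ := by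
      rw [NN_smul]; exact ENNReal.mul_ne_top (ENNReal.mul_ne_top hbs has) hN21
    have hNab : NN ((as * bs) • π12) f ≠ ⊤ := by
      rw [NN_smul]; exact ENNReal.mul_ne_top (ENNReal.mul_ne_top has hbs) hN12
    have hNbb : NN ((bs * bs) • π22) f ≠ ⊤ := by
      rw [NN_smul]; exact ENNReal.mul_ne_top (ENNReal.mul_ne_top hbs hbs) hN22
    have hPM : PP (M.prod M) f ≠ ⊤ := by
      rw [hMM, PP_add, PP_add, PP_add]
      exact ENNReal.add_ne_top.2 ⟨ENNReal.add_ne_top.2 ⟨hPaa, hPba⟩,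
        ENNReal.add_ne_top.2 ⟨hPab, hPbb⟩⟩
    have hNM : NN (M.prod M) f ≠ ⊤ := NN_ne_top _ hbf
    have htR : ∀ c c' : ℝ≥0∞, c ≠ ⊤ → c' ≠ ⊤ → (c * c').toReal = c.toReal * c'.toReal :=
      fun c c' _ _ => ENNReal.toReal_mul
    have hasR : as.toReal = At := ENNReal.toReal_ofReal hAt0
    have hbsR : bs.toReal = Bt := ENNReal.toReal_ofReal hBt0
    have hjM : jj (M.prod M) f
        = At * At * S + Bt * At * C2 + (At * Bt * C1 + Bt * Bt * D) := by
      rw [hMM, jj_add (by rw [PP_add]; exact ENNReal.add_ne_top.2 ⟨hPaa, hPba⟩)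
          (by rw [PP_add]; exact ENNReal.add_ne_top.2 ⟨hPab, hPbb⟩)
          (by rw [NN_add]; exact ENNReal.add_ne_top.2 ⟨hNaa, hNba⟩)
          (by rw [NN_add]; exact ENNReal.add_ne_top.2 ⟨hNab, hNbb⟩),
        jj_add hPaa hPba hNaa hNba, jj_add hPab hPbb hNab hNbb,
        jj_smul, jj_smul, jj_smul, jj_smul,
        ENNReal.toReal_mul, ENNReal.toReal_mul, ENNReal.toReal_mul, ENNReal.toReal_mul,
        hasR, hbsR]
    have hrepM : energy W M = ((1/2 * (At * At * S + Bt * At * C2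
        + (At * Bt * C1 + Bt * Bt * D)) : ℝ) : EReal) := by
      have hEdef : energy W M = ((1/2 : ℝ) : EReal) * eInt (M.prod M) f := rfl
      rw [hEdef, eInt_eq hPM hNM, ← EReal.coe_mul, hjM]
    have hle := hmin M hMprob
    rw [hrepρ, hrepM, EReal.coe_le_coe_iff] at hle
    -- real algebra
    have hA : At * (1 - s * p) = 1 - s := by rw [hAt]; field_simp
    have hBeq : Bt * (1 - s * p) = 1 := by rw [hBt]; field_simp
    have hexpand : (1 - s * p) ^ 2 * (At * At * S + Bt * At * C2 + (At * Bt * C1 + Bt * Bt * D))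
        = (1 - s) ^ 2 * S + (1 - s) * C2 + ((1 - s) * C1 + D) := by
      have : (1 - s * p) ^ 2 * (At * At * S + Bt * At * C2 + (At * Bt * C1 + Bt * Bt * D))
          = (At * (1 - s * p)) * (At * (1 - s * p)) * S
            + (Bt * (1 - s * p)) * (At * (1 - s * p)) * C2
            + ((At * (1 - s * p)) * (Bt * (1 - s * p)) * C1
              + (Bt * (1 - s * p)) * (Bt * (1 - s * p)) * D) := by ring
      rw [this, hA, hBeq]; ring
    have hkey2 : (1 - s * p) ^ 2 * (2 * Er)
        ≤ (1 - s) ^ 2 * S + (1 - s) * C2 + ((1 - s) * C1 + D) := by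
      rw [← hexpand]
      have := mul_le_mul_of_nonneg_left hle (sq_nonneg (1 - s * p))
      calc (1 - s * p) ^ 2 * (2 * Er)
          = (1 - s * p) ^ 2 * (1/2 * (S + C2 + (C1 + D))) * 2 := by rw [← h2Er]; ring
      _ ≤ (1 - s * p) ^ 2 * (1/2 * (At * At * S + Bt * At * C2
            + (At * Bt * C1 + Bt * Bt * D))) * 2 := by linarith
      _ = (1 - s * p) ^ 2 * (At * At * S + Bt * At * C2 + (At * Bt * C1 + Bt * Bt * D)) := by
            ring
    have hmul : s * (2 * S + C1 + C2)
        ≤ s * (2 * p * (2 * Er) + s * (S - p ^ 2 * (2 * Er))) := by linarith [hkey2]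
    exact le_of_mul_le_mul_left (by linarith [hmul]) hs0
  have hup : 2 * S + C1 + C2 ≤ 2 * p * (2 * Er) :=
    le_of_forall_small _ _ _ key
  -- lower bounds via the far-field estimate
  set A : Set (Ed d × Ed d) := {z | dist z.1 z.2 < r'} with hA
  have hAmeas : MeasurableSet A := by
    have : IsOpen A := isOpen_lt (by fun_prop) continuous_const
    exact this.measurableSet
  have hfar' : ∀ z : Ed d × Ed d, z ∉ A → ((2 * A' : ℝ) : EReal) ≤ f z := by
    intro z hz
    refine hfar _ ?_
    rw [← dist_eq_norm]
    exact not_lt.mp hz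
  have hWA : Wmin < 2 * A' := by nlinarith [hErlow, hErA]
  -- bound for π1 = ρB.prod ρ
  have main_bound : ∀ π : Measure (Ed d × Ed d), IsFiniteMeasure π →
      PP π f ≠ ⊤ → π A ≤ ρ B * qe → π A + π Aᶜ = ρ B →
      2 * A' * p - (2 * A' - Wmin) * (p * q) ≤ jj π f := by
    intro π hfinπ hPπ hπA hπuniv
    haveI := hfinπ
    have hb := jj_ge π f hAmeas Wmin (2 * A') hWmin.le hbf hfar' hPπ
    set a : ℝ := (π A).toReal with ha
    have ha0 : 0 ≤ a := ENNReal.toReal_nonneg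
    have haq : a ≤ p * q := by
      rw [ha, hp, hq, hqe, ← ENNReal.toReal_mul]
      exact ENNReal.toReal_mono (ENNReal.mul_ne_top hρBtop (measure_lt_top ρ _).ne) hπA
    have hac : a + (π Aᶜ).toReal = p := by
      rw [ha, hp, ← ENNReal.toReal_add (measure_lt_top π _).ne (measure_lt_top π _).ne, hπuniv]
    have : Wmin * a + 2 * A' * (p - a) ≤ jj π f := by
      rw [(by linarith : p - a = (π Aᶜ).toReal)]
      exact hb
    nlinarith [this, haq, hWA]
  have hbound1 : 2 * A' * p - (2 * A' - Wmin) * (p * q) ≤ S + C1 := by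
    have hpr : ρB.prod ρ = π11 + π12 := by
      conv_lhs => rw [← hsum, Measure.prod_add]
    have hPπ : PP (ρB.prod ρ) f ≠ ⊤ := by
      rw [hpr, PP_add]; exact ENNReal.add_ne_top.2 ⟨hP11, hP12⟩
    have hjj : jj (ρB.prod ρ) f = S + C1 := by
      rw [hpr, jj_add hP11 hP12 hN11 hN12]
    have hrestr : ρB.prod ρ = (ρ.prod ρ).restrict (B ×ˢ univ) :=
      Measure.restrict_prod_eq_prod_univ _
    have hπA : (ρB.prod ρ) A ≤ ρ B * qe := by
      rw [hrestr, Measure.restrict_apply' (hBmeas.prod MeasurableSet.univ)]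
      calc (ρ.prod ρ) (A ∩ B ×ˢ univ) ≤ (ρ.prod ρ) (B ×ˢ ball x₀ (r' + 1)) := by
            refine measure_mono ?_
            rintro ⟨z1, z2⟩ ⟨hzA, hz1, -⟩
            refine ⟨hz1, ?_⟩
            have h1 : dist z1 z2 < r' := hzA
            have h2 : dist z1 x₀ < 1 := hz1
            have : dist z2 x₀ < r' + 1 := by
              calc dist z2 x₀ ≤ dist z2 z1 + dist z1 x₀ := dist_triangle _ _ _
              _ = dist z1 z2 + dist z1 x₀ := by rw [dist_comm]
              _ < r' + 1 := by linarith
            exact this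
      _ = ρ B * qe := by rw [Measure.prod_prod, hqe]
    have hπuniv : (ρB.prod ρ) A + (ρB.prod ρ) Aᶜ = ρ B := by
      rw [measure_add_measure_compl hAmeas, ← univ_prod_univ, Measure.prod_prod,
        Measure.restrict_apply_univ, measure_univ, mul_one]
    have := main_bound (ρB.prod ρ) inferInstance hPπ hπA hπuniv
    rwa [hjj] at this
  have hbound2 : 2 * A' * p - (2 * A' - Wmin) * (p * q) ≤ S + C2 := by
    have hpr : ρ.prod ρB = π11 + π21 := by
      conv_lhs => rw [← hsum, Measure.add_prod]
    have hPπ : PP (ρ.prod ρB) f ≠ ⊤ := by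
      rw [hpr, PP_add]; exact ENNReal.add_ne_top.2 ⟨hP11, hP21⟩
    have hjj : jj (ρ.prod ρB) f = S + C2 := by
      rw [hpr, jj_add hP11 hP21 hN11 hN21]
    have hrestr : ρ.prod ρB = (ρ.prod ρ).restrict (univ ×ˢ B) := by
      conv_lhs => rw [← Measure.restrict_univ (μ := ρ)]
      rw [Measure.prod_restrict]
    have hπA : (ρ.prod ρB) A ≤ ρ B * qe := by
      rw [hrestr, Measure.restrict_apply' (MeasurableSet.univ.prod hBmeas)]
      calc (ρ.prod ρ) (A ∩ univ ×ˢ B) ≤ (ρ.prod ρ) ((ball x₀ (r' + 1)) ×ˢ B) := by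
            refine measure_mono ?_
            rintro ⟨z1, z2⟩ ⟨hzA, -, hz2⟩
            refine ⟨?_, hz2⟩
            have h1 : dist z1 z2 < r' := hzA
            have h2 : dist z2 x₀ < 1 := hz2
            calc dist z1 x₀ ≤ dist z1 z2 + dist z2 x₀ := dist_triangle _ _ _
            _ < r' + 1 := by linarith
      _ = ρ B * qe := by rw [Measure.prod_prod, hqe, mul_comm]
    have hπuniv : (ρ.prod ρB) A + (ρ.prod ρB) Aᶜ = ρ B := by
      rw [measure_add_measure_compl hAmeas, ← univ_prod_univ, Measure.prod_prod,
        Measure.restrict_apply_univ, measure_univ, one_mul]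
    have := main_bound (ρ.prod ρB) inferInstance hPπ hπA hπuniv
    rwa [hjj] at this
  -- conclusion
  have hq_ge : (A' - Er) / (A' - Wmin / 2) ≤ q := by
    rw [div_le_iff₀ (by linarith : (0:ℝ) < A' - Wmin / 2)]
    nlinarith [hbound1, hbound2, hup, hp0, hq0]
  calc ENNReal.ofReal ((A' - Er) / (A' - Wmin / 2)) ≤ ENNReal.ofReal q :=
        ENNReal.ofReal_le_ofReal hq_ge
  _ = qe := by rw [hq, ENNReal.ofReal_toReal (measure_lt_top ρ _).ne]
end ULM

/-- **Lemma (uniform local mass for global minimisers).** Under Hypotheses (H1)–(H5), if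
`ρ` is a global minimiser of the interaction energy, then there are `r'' > 0` and
`m' > 0` such that `ρ(B(x₀, r'')) ≥ m'` for every `x₀` in the support of `ρ`; moreover,
for any `A'` with `E(ρ) < A' < (1/2) W_∞` one may take `m' = (A' − E(ρ))/(A' − W_min/2)`. -/
theorem uniform_local_mass_global_minimiser
    {d : ℕ} (hd : 1 ≤ d) (W : Ed d → EReal) (hWmeas : Measurable W)
    (Wmin : ℝ) (hWmin : Wmin < 0) (hbound : ∀ x, (Wmin : EReal) ≤ W x)
    (hloc : ∀ (x : Ed d) (r : ℝ), 0 < r →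
      ∫⁻ y in Metric.ball x r, (W y).abs ∂volume < ⊤)
    (hsym : ∀ x, W (-x) = W x)
    (Winf : EReal) (hlim : Tendsto W (cocompact (Ed d)) (nhds Winf))
    (hunst : ∃ μ : Measure (Ed d), IsProbabilityMeasure μ ∧
      energy W μ < ((1 / 2 : ℝ) : EReal) * Winf)
    (hlsc : LowerSemicontinuous W)
    (ρ : Measure (Ed d)) (hρ : IsMinimiser W ρ) :
    (∃ r'' : ℝ, 0 < r'' ∧ ∃ m' : ℝ, 0 < m' ∧
      ∀ x₀ ∈ msupport ρ, ENNReal.ofReal m' ≤ ρ (Metric.ball x₀ r'')) ∧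
    ∀ A' : ℝ, energy W ρ < (A' : EReal) → (A' : EReal) < ((1 / 2 : ℝ) : EReal) * Winf →
      ∃ r'' : ℝ, 0 < r'' ∧ ∀ x₀ ∈ msupport ρ,
        ENNReal.ofReal ((A' - (energy W ρ).toReal) / (A' - Wmin / 2)) ≤
          ρ (Metric.ball x₀ r'') := by
  obtain ⟨hρprob, hmin⟩ := hρ
  haveI := hρprob
  have part2 : ∀ A' : ℝ, energy W ρ < (A' : EReal) →
      (A' : EReal) < ((1 / 2 : ℝ) : EReal) * Winf →
      ∃ r'' : ℝ, 0 < r'' ∧ ∀ x₀ ∈ msupport ρ,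
        ENNReal.ofReal ((A' - (energy W ρ).toReal) / (A' - Wmin / 2)) ≤
          ρ (Metric.ball x₀ r'') := by
    intro A' h1 h2
    have h2A : ((2 * A' : ℝ) : EReal) < Winf := by
      induction Winf with
      | bot =>
        rw [EReal.coe_mul_bot_of_pos (by norm_num)] at h2
        exact absurd h2 (not_lt_bot)
      | coe w =>
        rw [← EReal.coe_mul] at h2
        have : A' < 1/2 * w := by exact_mod_cast h2
        exact_mod_cast (by linarith : 2 * A' < w)
      | top => exact EReal.coe_lt_top _
    have hev : ∀ᶠ z in cocompact (Ed d), ((2 * A' : ℝ) : EReal) < W z :=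
      hlim.eventually (eventually_gt_nhds h2A)
    rw [Filter.hasBasis_cocompact.eventually_iff] at hev
    obtain ⟨K, hK, hKev⟩ := hev
    obtain ⟨R, hR⟩ := hK.isBounded.subset_closedBall 0
    set r' : ℝ := max R 0 + 1 with hr'def
    have hr' : 0 < r' := by positivity
    have hfar : ∀ z : Ed d, r' ≤ ‖z‖ → ((2 * A' : ℝ) : EReal) ≤ W z := by
      intro z hz
      refine (hKev ?_).le
      intro hzK
      have h3 : ‖z‖ ≤ R := by
        have := hR hzK
        rwa [mem_closedBall_zero_iff] at this
      have h4 : R ≤ max R 0 := le_max_left _ _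
      linarith
    exact ⟨r' + 1, by positivity,
      fun x₀ hx₀ => ULM.core W Wmin hWmin hbound ρ hρprob hmin A' r' hr' hfar h1 x₀ hx₀⟩
  refine ⟨?_, part2⟩
  obtain ⟨μ, hμprob, hμE⟩ := hunst
  have hEle : energy W ρ < ((1 / 2 : ℝ) : EReal) * Winf := lt_of_le_of_lt (hmin μ hμprob) hμE
  obtain ⟨hrep, hErlow, -⟩ := ULM.energy_real W Wmin hWmin.le hbound ρ (ne_top_of_lt hEle)
  set Er : ℝ := (energy W ρ).toReal with hEr
  have hex : ∃ A' : ℝ, energy W ρ < (A' : EReal) ∧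
      (A' : EReal) < ((1 / 2 : ℝ) : EReal) * Winf := by
    induction Winf with
    | bot =>
      rw [EReal.coe_mul_bot_of_pos (by norm_num)] at hEle
      exact absurd hEle (not_lt_bot)
    | coe w =>
      rw [← EReal.coe_mul] at hEle ⊢
      rw [hrep] at hEle ⊢
      have hw : Er < 1/2 * w := by exact_mod_cast hEle
      refine ⟨(Er + 1/2 * w) / 2, ?_, ?_⟩ <;> exact_mod_cast (by linarith)
    | top =>
      refine ⟨Er + 1, ?_, ?_⟩
      · rw [hrep]; exact_mod_cast (by linarith : Er < Er + 1)
      · rw [EReal.coe_mul_top_of_pos (by norm_num : (0:ℝ) < 1/2)]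
        exact EReal.coe_lt_top _
  obtain ⟨A', hA1, hA2⟩ := hex
  obtain ⟨r'', hr'', hbd⟩ := part2 A' hA1 hA2
  refine ⟨r'', hr'', (A' - Er) / (A' - Wmin / 2), ?_, hbd⟩
  have hErA : Er < A' := by
    rw [hrep] at hA1
    exact_mod_cast hA1
  exact div_pos (by linarith) (by linarith)
end
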